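/- arXiv:0709.1477 — 7 statements merged into one kernel-verified Lean document; each statement's English description precedes it below -/
import Mathlib

section
/- Let n ≥ 1 and let W : S_n → ℝ be a probability distribution on S_n (W(σ) ≥ 0 for all σ and Σ_σ W(σ) = 1) that is constant on descent classes, i.e. W(σ) = W(τ) whenever Des(σ) = Des(τ). Suppose there exists τ₀ ∈ S_n with W(τ₀) > 0 such that Des(τ₀) is neither ∅ nor the full set {1,…,n−1}. Then every function u : S_n → ℝ satisfying u(γ) = Σ_{σ∈S_n} W(σ)·u(σ⁻¹γ) for all γ ∈ S_n is constant. Consequently, the left random walk on S_n driven by W has a unique stationary probability distribution, namely the uniform distribution ν(γ) = 1/n! for all γ. -/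
open Equiv Equiv.Perm Finset

/-- The descent set of a permutation of `Fin (n+1)`, as a finset of `Fin n`. -/
def Des {n : ℕ} (σ : Equiv.Perm (Fin (n + 1))) : Finset (Fin n) :=
  Finset.univ.filter (fun i : Fin n => σ i.succ < σ i.castSucc)

lemma mem_Des {n : ℕ} {σ : Equiv.Perm (Fin (n + 1))} {i : Fin n} :
    i ∈ Des σ ↔ σ i.succ < σ i.castSucc := by simp [Des]

/-- downward closed descent set ("initial segment") -/
def IsInit {n : ℕ} (D : Finset (Fin n)) : Prop := ∀ i j : Fin n, i ≤ j → j ∈ D → i ∈ D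

/-- upward closed descent set ("final segment") -/
def IsFin {n : ℕ} (D : Finset (Fin n)) : Prop := ∀ i j : Fin n, i ≤ j → i ∈ D → j ∈ D

lemma succAbove_val {n : ℕ} (p : Fin (n+1)) (i : Fin n) :
    ((p.succAbove i : Fin (n+1)) : ℕ) = if (i : ℕ) < (p : ℕ) then (i : ℕ) else (i : ℕ) + 1 := by
  rw [Fin.succAbove]
  by_cases h : i.castSucc < p
  · rw [if_pos h, if_pos (by exact_mod_cast h)]
    simp
  · rw [if_neg h, if_neg (by rw [Fin.lt_def] at h; simpa using h)]
    rfl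

section InsLast

variable {n : ℕ}

/-- Insert value `v` at the last position, bumping all values `≥ v` up by one. -/
noncomputable def insLast (σ' : Equiv.Perm (Fin (n+1))) (v : Fin (n+2)) : Equiv.Perm (Fin (n+2)) :=
  Equiv.ofBijective
    (fun x => if h : x = Fin.last (n+1) then v else v.succAbove (σ' (x.castPred h)))
    (by
      apply (Finite.injective_iff_bijective).mp
      intro a b hab
      simp only at hab
      by_cases ha : a = Fin.last (n+1) <;> by_cases hb : b = Fin.last (n+1)
      · rw [ha, hb]
      · rw [dif_pos ha, dif_neg hb] at hab
        exact absurd hab.symm (Fin.succAbove_ne v _)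
      · rw [dif_neg ha, dif_pos hb] at hab
        exact absurd hab (Fin.succAbove_ne v _)
      · rw [dif_neg ha, dif_neg hb] at hab
        have h2 : a.castPred ha = b.castPred hb := σ'.injective (Fin.succAbove_right_injective hab)
        have := congrArg Fin.castSucc h2
        simpa using this)

@[simp] lemma insLast_apply_castSucc (σ' : Equiv.Perm (Fin (n+1))) (v : Fin (n+2)) (i : Fin (n+1)) :
    insLast σ' v i.castSucc = v.succAbove (σ' i) := by
  have h : i.castSucc ≠ Fin.last (n+1) := Fin.ne_last_of_lt (Fin.castSucc_lt_last i)
  simp [insLast, Equiv.ofBijective, h]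

@[simp] lemma insLast_apply_last (σ' : Equiv.Perm (Fin (n+1))) (v : Fin (n+2)) :
    insLast σ' v (Fin.last (n+1)) = v := by
  simp [insLast, Equiv.ofBijective]

lemma des_insLast_castSucc (σ' : Equiv.Perm (Fin (n+1))) (v : Fin (n+2)) (j : Fin n) :
    j.castSucc ∈ Des (insLast σ' v) ↔ j ∈ Des σ' := by
  rw [mem_Des, mem_Des]
  have h1 : (j.castSucc : Fin (n+1)).succ = (j.succ : Fin (n+1)).castSucc := by
    apply Fin.ext; simp
  have h2 : (j.castSucc : Fin (n+1)).castSucc = (j.castSucc : Fin (n+1)).castSucc := rfl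
  rw [h1, insLast_apply_castSucc, insLast_apply_castSucc]
  exact Fin.succAbove_lt_succAbove_iff

lemma des_insLast_last (σ' : Equiv.Perm (Fin (n+1))) (v : Fin (n+2)) :
    Fin.last n ∈ Des (insLast σ' v) ↔ (v : ℕ) ≤ (σ' (Fin.last n) : ℕ) := by
  rw [mem_Des]
  have h1 : (Fin.last n).succ = Fin.last (n+1) := Fin.succ_last n
  rw [h1, insLast_apply_last]
  have h2 : (Fin.last n).castSucc = (Fin.last n).castSucc := rfl
  rw [insLast_apply_castSucc]
  constructor
  · intro h
    have := succAbove_val v (σ' (Fin.last n))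
    have hv := (Fin.lt_iff_val_lt_val).mp h
    rw [this] at hv
    split at hv <;> omega
  · intro h
    have := succAbove_val v (σ' (Fin.last n))
    rw [Fin.lt_iff_val_lt_val, this]
    split <;> omega

end InsLast

section Restrict

variable {n : ℕ}

/-- restriction of a descent set to the first `n` indices -/
def Dlow (D : Finset (Fin (n+1))) : Finset (Fin n) :=
  Finset.univ.filter (fun j : Fin n => j.castSucc ∈ D)

lemma mem_Dlow {D : Finset (Fin (n+1))} {j : Fin n} : j ∈ Dlow D ↔ j.castSucc ∈ D := by
  simp [Dlow]

lemma des_insLast_eq {σ' : Equiv.Perm (Fin (n+1))} {v : Fin (n+2)} {D : Finset (Fin (n+1))}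
    (h' : Des σ' = Dlow D)
    (hv : ((v : ℕ) ≤ (σ' (Fin.last n) : ℕ)) ↔ Fin.last n ∈ D) :
    Des (insLast σ' v) = D := by
  ext i
  induction i using Fin.lastCases with
  | last => rw [des_insLast_last]; exact hv
  | cast j => rw [des_insLast_castSucc, h', mem_Dlow]

lemma dlow_nonempty {D : Finset (Fin (n+1))} (hne : D.Nonempty) (hl : Fin.last n ∉ D) :
    (Dlow D).Nonempty := by
  obtain ⟨d, hd⟩ := hne
  have hdl : d ≠ Fin.last n := fun h => hl (h ▸ hd)
  exact ⟨d.castPred hdl, mem_Dlow.mpr (by rwa [Fin.castSucc_castPred])⟩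

lemma dlow_ne_univ {D : Finset (Fin (n+1))} (hl : Fin.last n ∈ D) (hu : D ≠ Finset.univ) :
    Dlow D ≠ Finset.univ := by
  intro h
  apply hu
  ext i
  simp only [Finset.mem_univ, iff_true]
  induction i using Fin.lastCases with
  | last => exact hl
  | cast j => exact mem_Dlow.mp (h ▸ Finset.mem_univ j)

end Restrict

section Baselines

/-- every descent set is realized -/
lemma exists_perm_des : ∀ (n : ℕ) (D : Finset (Fin n)), ∃ σ : Equiv.Perm (Fin (n+1)), Des σ = D
  | 0, D => ⟨1, Subsingleton.elim _ _⟩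
  | (n+1), D => by
    obtain ⟨σ', hσ'⟩ := exists_perm_des n (Dlow D)
    by_cases hl : Fin.last n ∈ D
    · refine ⟨insLast σ' 0, des_insLast_eq hσ' ?_⟩
      simpa using hl
    · refine ⟨insLast σ' (Fin.last (n+1)), des_insLast_eq hσ' ?_⟩
      simp only [Fin.val_last]
      constructor
      · intro h; exact absurd (lt_of_le_of_lt h (Fin.is_lt _)) (by omega)
      · intro h; exact absurd h hl

/-- every nonempty descent set is realized with the max value away from the last position -/
lemma exists_perm_des_top : ∀ (n : ℕ) (D : Finset (Fin (n+1))), D.Nonempty →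
    ∃ σ : Equiv.Perm (Fin (n+2)), Des σ = D ∧ ((σ⁻¹ (Fin.last (n+1)) : Fin (n+2)) : ℕ) ≤ n
  | 0, D, hne => by
    have h0 : (0 : Fin 1) ∈ D := by
      obtain ⟨d, hd⟩ := hne
      have hd0 : d = 0 := by apply Fin.ext; omega
      rwa [hd0] at hd
    refine ⟨insLast 1 0, des_insLast_eq (Subsingleton.elim _ _) (by simpa using h0), ?_⟩
    have happ : insLast (1 : Equiv.Perm (Fin 1)) 0 ((0 : Fin 1).castSucc) = Fin.last 1 := by
      rw [insLast_apply_castSucc]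
      apply Fin.ext
      rw [succAbove_val]
      simp
    have : (insLast (1 : Equiv.Perm (Fin 1)) 0)⁻¹ (Fin.last 1) = (0 : Fin 1).castSucc :=
      (Equiv.Perm.inv_eq_iff_eq).mpr happ.symm
    rw [this]; simp
  | (n+1), D, hne => by
    by_cases hl : Fin.last (n+1) ∈ D
    · obtain ⟨σ', hσ'⟩ := exists_perm_des (n+1) (Dlow D)
      refine ⟨insLast σ' 0, des_insLast_eq hσ' (by simpa using hl), ?_⟩
      set P' := σ'⁻¹ (Fin.last (n+1))
      have happ : insLast σ' 0 P'.castSucc = Fin.last (n+2) := by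
        rw [insLast_apply_castSucc]
        apply Fin.ext
        rw [succAbove_val]
        have : σ' P' = Fin.last (n+1) := Equiv.apply_symm_apply _ _
        rw [this]
        simp
      have : (insLast σ' 0)⁻¹ (Fin.last (n+2)) = P'.castSucc :=
        (Equiv.Perm.inv_eq_iff_eq).mpr happ.symm
      rw [this]
      simpa using Fin.is_le P'
    · have hne' : (Dlow D).Nonempty := dlow_nonempty hne hl
      obtain ⟨σ'', hσ'', hP''⟩ := exists_perm_des_top n (Dlow D) hne'
      set v : Fin (n+3) := (σ'' (Fin.last (n+1))).succ with hv
      have hlastval : (σ'' (Fin.last (n+1)) : ℕ) ≤ n := by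
        by_contra h
        have : σ'' (Fin.last (n+1)) = Fin.last (n+1) := by
          apply Fin.ext; simp; omega
        have : σ''⁻¹ (Fin.last (n+1)) = Fin.last (n+1) :=
          (Equiv.Perm.inv_eq_iff_eq).mpr this.symm
        rw [this] at hP''
        simp only [Fin.val_last] at hP''; omega
      refine ⟨insLast σ'' v, des_insLast_eq hσ'' ?_, ?_⟩
      · simp only [hv, Fin.val_succ]
        constructor
        · omega
        · intro h; exact absurd h hl
      · set P'' := σ''⁻¹ (Fin.last (n+1))
        have happ : insLast σ'' v P''.castSucc = Fin.last (n+2) := by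
          rw [insLast_apply_castSucc]
          apply Fin.ext
          rw [succAbove_val]
          have : σ'' P'' = Fin.last (n+1) := Equiv.apply_symm_apply _ _
          rw [this]
          simp only [Fin.val_last, hv, Fin.val_succ]
          rw [if_neg (by omega)]
        have : (insLast σ'' v)⁻¹ (Fin.last (n+2)) = P''.castSucc :=
          (Equiv.Perm.inv_eq_iff_eq).mpr happ.symm
        rw [this]
        simpa using le_trans hP'' (by omega)

/-- every non-full descent set is realized with the min value away from the last position -/
lemma exists_perm_des_bot : ∀ (n : ℕ) (D : Finset (Fin (n+1))), D ≠ Finset.univ →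
    ∃ σ : Equiv.Perm (Fin (n+2)), Des σ = D ∧ ((σ⁻¹ (0 : Fin (n+2)) : Fin (n+2)) : ℕ) ≤ n
  | 0, D, hu => by
    have hD : D = ∅ := by
      rcases Finset.eq_empty_or_nonempty D with h | h
      · exact h
      · exfalso; apply hu
        apply Finset.eq_univ_of_card
        have : D.card ≥ 1 := Finset.card_pos.mpr h
        have : D.card ≤ 1 := by simpa using Finset.card_le_univ D
        simp; omega
    refine ⟨1, ?_, by simp⟩
    rw [hD]
    ext i
    simp only [mem_Des, Finset.notMem_empty, iff_false, not_lt, Equiv.Perm.one_apply]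
    exact (Fin.castSucc_lt_succ (i := i)).le
  | (n+1), D, hu => by
    by_cases hl : Fin.last (n+1) ∈ D
    · have hu' : Dlow D ≠ Finset.univ := dlow_ne_univ hl hu
      obtain ⟨σ'', hσ'', hP''⟩ := exists_perm_des_bot n (Dlow D) hu'
      have hlastval : 1 ≤ (σ'' (Fin.last (n+1)) : ℕ) := by
        by_contra h
        have h0 : σ'' (Fin.last (n+1)) = 0 := by apply Fin.ext; simp only [Fin.val_zero]; omega
        have : σ''⁻¹ 0 = Fin.last (n+1) := (Equiv.Perm.inv_eq_iff_eq).mpr h0.symm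
        rw [this] at hP''
        simp only [Fin.val_last] at hP''; omega
      refine ⟨insLast σ'' 1, des_insLast_eq hσ'' ?_, ?_⟩
      · constructor
        · intro _; exact hl
        · intro _
          simpa using hlastval
      · set P'' := σ''⁻¹ (0 : Fin (n+2))
        have happ : insLast σ'' 1 P''.castSucc = 0 := by
          rw [insLast_apply_castSucc]
          apply Fin.ext
          rw [succAbove_val]
          have : σ'' P'' = 0 := Equiv.apply_symm_apply _ _
          rw [this]
          simp
        have : (insLast σ'' 1)⁻¹ 0 = P''.castSucc := (Equiv.Perm.inv_eq_iff_eq).mpr happ.symm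
        rw [this]
        simpa using le_trans hP'' (by omega)
    · obtain ⟨σ', hσ'⟩ := exists_perm_des (n+1) (Dlow D)
      refine ⟨insLast σ' (Fin.last (n+2)), des_insLast_eq hσ' ?_, ?_⟩
      · simp only [Fin.val_last]
        constructor
        · intro h; exact absurd (lt_of_le_of_lt h (Fin.is_lt _)) (by omega)
        · intro h; exact absurd h hl
      · set P' := σ'⁻¹ (0 : Fin (n+2))
        have happ : insLast σ' (Fin.last (n+2)) P'.castSucc = 0 := by
          rw [insLast_apply_castSucc]
          apply Fin.ext
          rw [succAbove_val]
          have : σ' P' = 0 := Equiv.apply_symm_apply _ _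
          rw [this]
          simp only [Fin.val_zero, Fin.val_last]
          simp
        have : (insLast σ' (Fin.last (n+2)))⁻¹ 0 = P'.castSucc :=
          (Equiv.Perm.inv_eq_iff_eq).mpr happ.symm
        rw [this]
        simpa using Fin.is_le P'

end Baselines

noncomputable def mkPerm {m : ℕ} (f : Fin m → Fin m) (hf : Function.Injective f) :
    Equiv.Perm (Fin m) := Equiv.ofBijective f ((Finite.injective_iff_bijective).mp hf)

@[simp] lemma mkPerm_apply {m : ℕ} (f : Fin m → Fin m) (hf : Function.Injective f) (x : Fin m) :
    mkPerm f hf x = f x := rfl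

/-- E1 witness: `D` is everything except the last index. -/
lemma witE1 (n : ℕ) (D : Finset (Fin (n+1))) (hD : ∀ i : Fin (n+1), i ∈ D ↔ (i : ℕ) < n)
    (k : Fin (n+1)) (hk : 1 ≤ (k : ℕ)) :
    ∃ (σ : Equiv.Perm (Fin (n+2))) (P Q : Fin (n+2)),
      Des σ = D ∧ σ P = k.castSucc ∧ σ Q = k.succ ∧
      ((P : ℕ) + 2 ≤ (Q : ℕ) ∨ (Q : ℕ) + 2 ≤ (P : ℕ)) := by
  have hKle : (k : ℕ) ≤ n := by omega
  set K := (k : ℕ) with hK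
  -- σ = (N, N-1, ..., K+2, K, K-1, ..., 0, K+1) with N = n+1
  set f : Fin (n+2) → Fin (n+2) := fun i =>
    if (i : ℕ) + K + 2 ≤ n + 1 then ⟨n + 1 - (i : ℕ), by omega⟩
    else if (i : ℕ) ≤ n then ⟨n - (i : ℕ), by omega⟩
    else ⟨K + 1, by omega⟩ with hf
  have hinj : Function.Injective f := by
    intro a b hab
    have h := congrArg Fin.val hab
    simp only [hf, apply_ite Fin.val] at h
    split_ifs at h <;> (apply Fin.ext; omega)
  refine ⟨mkPerm f hinj, ⟨n - K, by omega⟩, ⟨n + 1, by omega⟩, ?_, ?_, ?_, ?_⟩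
  · ext j
    rw [mem_Des, hD j]
    simp only [mkPerm_apply, hf, Fin.lt_def, Fin.val_succ, Fin.coe_castSucc,
      apply_ite Fin.val]
    split_ifs <;> omega
  · apply Fin.ext
    have : ((mkPerm f hinj ⟨n - K, by omega⟩ : Fin (n+2)) : ℕ)
        = ((f ⟨n - K, by omega⟩ : Fin (n+2)) : ℕ) := rfl
    rw [this]
    simp only [hf, apply_ite Fin.val, Fin.coe_castSucc]
    split_ifs <;> omega
  · apply Fin.ext
    have : ((mkPerm f hinj ⟨n + 1, by omega⟩ : Fin (n+2)) : ℕ)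
        = ((f ⟨n + 1, by omega⟩ : Fin (n+2)) : ℕ) := rfl
    rw [this]
    simp only [hf, apply_ite Fin.val, Fin.val_succ]
    split_ifs <;> omega
  · left
    show n - K + 2 ≤ n + 1
    omega

/-- E3 witness: `D = [a, n-1]`, pair of values `(n-1, n)`. -/
lemma witE3 (n a : ℕ) (D : Finset (Fin (n+1)))
    (hD : ∀ i : Fin (n+1), i ∈ D ↔ (a ≤ (i : ℕ) ∧ (i : ℕ) < n)) (ha1 : 1 ≤ a) (ha2 : a < n)
    (k : Fin (n+1)) (hk : (k : ℕ) = n - 1) :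
    ∃ (σ : Equiv.Perm (Fin (n+2))) (P Q : Fin (n+2)),
      Des σ = D ∧ σ P = k.castSucc ∧ σ Q = k.succ ∧
      ((P : ℕ) + 2 ≤ (Q : ℕ) ∨ (Q : ℕ) + 2 ≤ (P : ℕ)) := by
  set f : Fin (n+2) → Fin (n+2) := fun i =>
    if h1 : (i : ℕ) + 2 ≤ a then i
    else if h2 : (i : ℕ) + 1 = a then ⟨n - 1, by omega⟩
    else if h3 : (i : ℕ) = a then ⟨n + 1, by omega⟩
    else if h4 : (i : ℕ) ≤ n then ⟨n + a - 1 - (i : ℕ), by omega⟩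
    else ⟨n, by omega⟩ with hf
  have hinj : Function.Injective f := by
    intro x y hxy
    have h := congrArg Fin.val hxy
    simp only [hf, apply_dite Fin.val] at h
    split_ifs at h <;> (apply Fin.ext; omega)
  refine ⟨mkPerm f hinj, ⟨a - 1, by omega⟩, ⟨n + 1, by omega⟩, ?_, ?_, ?_, ?_⟩
  · ext j
    rw [mem_Des, hD j]
    simp only [mkPerm_apply, hf, Fin.lt_def, Fin.val_succ, Fin.coe_castSucc,
      apply_dite Fin.val]
    split_ifs <;> omega
  · apply Fin.ext
    have : ((mkPerm f hinj ⟨a - 1, by omega⟩ : Fin (n+2)) : ℕ)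
        = ((f ⟨a - 1, by omega⟩ : Fin (n+2)) : ℕ) := rfl
    rw [this]
    simp only [hf, apply_dite Fin.val, Fin.coe_castSucc]
    split_ifs <;> omega
  · apply Fin.ext
    have : ((mkPerm f hinj ⟨n + 1, by omega⟩ : Fin (n+2)) : ℕ)
        = ((f ⟨n + 1, by omega⟩ : Fin (n+2)) : ℕ) := rfl
    rw [this]
    simp only [hf, apply_dite Fin.val, Fin.val_succ]
    split_ifs <;> omega
  · left
    show a - 1 + 2 ≤ n + 1
    omega

/-- E4 witness: `D = [0, t] ∪ {n}`, pair of values `(1, 2)`. -/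
lemma witE4 (n t : ℕ) (D : Finset (Fin (n+1)))
    (hD : ∀ i : Fin (n+1), i ∈ D ↔ ((i : ℕ) ≤ t ∨ (i : ℕ) = n)) (ht : t + 2 ≤ n)
    (k : Fin (n+1)) (hk : (k : ℕ) = 1) :
    ∃ (σ : Equiv.Perm (Fin (n+2))) (P Q : Fin (n+2)),
      Des σ = D ∧ σ P = k.castSucc ∧ σ Q = k.succ ∧
      ((P : ℕ) + 2 ≤ (Q : ℕ) ∨ (Q : ℕ) + 2 ≤ (P : ℕ)) := by
  set f : Fin (n+2) → Fin (n+2) := fun i =>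
    if h1 : (i : ℕ) ≤ t then ⟨t + 2 - (i : ℕ), by omega⟩
    else if h2 : (i : ℕ) = t + 1 then ⟨0, by omega⟩
    else if h3 : (i : ℕ) ≤ n then ⟨(i : ℕ) + 1, by omega⟩
    else ⟨1, by omega⟩ with hf
  have hinj : Function.Injective f := by
    intro x y hxy
    have h := congrArg Fin.val hxy
    simp only [hf, apply_dite Fin.val] at h
    split_ifs at h <;> (apply Fin.ext; omega)
  refine ⟨mkPerm f hinj, ⟨n + 1, by omega⟩, ⟨t, by omega⟩, ?_, ?_, ?_, ?_⟩
  · ext j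
    rw [mem_Des, hD j]
    simp only [mkPerm_apply, hf, Fin.lt_def, Fin.val_succ, Fin.coe_castSucc,
      apply_dite Fin.val]
    split_ifs <;> omega
  · apply Fin.ext
    have : ((mkPerm f hinj ⟨n + 1, by omega⟩ : Fin (n+2)) : ℕ)
        = ((f ⟨n + 1, by omega⟩ : Fin (n+2)) : ℕ) := rfl
    rw [this]
    simp only [hf, apply_dite Fin.val, Fin.coe_castSucc]
    split_ifs <;> omega
  · apply Fin.ext
    have : ((mkPerm f hinj ⟨t, by omega⟩ : Fin (n+2)) : ℕ)
        = ((f ⟨t, by omega⟩ : Fin (n+2)) : ℕ) := rfl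
    rw [this]
    simp only [hf, apply_dite Fin.val, Fin.val_succ]
    split_ifs <;> omega
  · right
    show t + 2 ≤ n + 1
    omega

/-- BA witness: `D = [0, t]`; values `0` and `1` sit at adjacent positions `t+1, t+2`. -/
lemma witBA (n t : ℕ) (D : Finset (Fin (n+1)))
    (hD : ∀ i : Fin (n+1), i ∈ D ↔ (i : ℕ) ≤ t) (ht : t + 1 ≤ n) :
    ∃ σ : Equiv.Perm (Fin (n+2)),
      Des σ = D ∧ σ ⟨t + 1, by omega⟩ = 0 ∧ σ ⟨t + 2, by omega⟩ = 1 := by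
  set f : Fin (n+2) → Fin (n+2) := fun i =>
    if h1 : (i : ℕ) ≤ t then ⟨t + 2 - (i : ℕ), by omega⟩
    else if h2 : (i : ℕ) = t + 1 then ⟨0, by omega⟩
    else if h3 : (i : ℕ) = t + 2 then ⟨1, by omega⟩
    else i with hf
  have hinj : Function.Injective f := by
    intro x y hxy
    have h := congrArg Fin.val hxy
    simp only [hf, apply_dite Fin.val] at h
    split_ifs at h <;> (apply Fin.ext; omega)
  refine ⟨mkPerm f hinj, ?_, ?_, ?_⟩
  · ext j
    rw [mem_Des, hD j]
    simp only [mkPerm_apply, hf, Fin.lt_def, Fin.val_succ, Fin.coe_castSucc,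
      apply_dite Fin.val]
    split_ifs <;> omega
  · apply Fin.ext
    have : ((mkPerm f hinj ⟨t + 1, by omega⟩ : Fin (n+2)) : ℕ)
        = ((f ⟨t + 1, by omega⟩ : Fin (n+2)) : ℕ) := rfl
    rw [this]
    simp only [hf, apply_dite Fin.val, Fin.val_zero]
    split_ifs <;> omega
  · apply Fin.ext
    have : ((mkPerm f hinj ⟨t + 2, by omega⟩ : Fin (n+2)) : ℕ)
        = ((f ⟨t + 2, by omega⟩ : Fin (n+2)) : ℕ) := rfl
    rw [this]
    simp only [hf, apply_dite Fin.val, Fin.val_one]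
    split_ifs <;> omega

section Mirror

variable {n : ℕ}

/-- conjugation by the order-reversing permutation -/
def conjRev {m : ℕ} (σ : Equiv.Perm (Fin m)) : Equiv.Perm (Fin m) :=
  Fin.revPerm * σ * Fin.revPerm

lemma conjRev_apply {m : ℕ} (σ : Equiv.Perm (Fin m)) (x : Fin m) :
    conjRev σ x = (σ x.rev).rev := rfl

lemma mem_des_conjRev (σ : Equiv.Perm (Fin (n+1))) (i : Fin n) :
    i ∈ Des (conjRev σ) ↔ i.rev ∈ Des σ := by
  rw [mem_Des, mem_Des, conjRev_apply, conjRev_apply]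
  rw [Fin.rev_succ, Fin.rev_castSucc]
  exact Fin.rev_lt_rev

lemma mem_image_rev {m : ℕ} {D : Finset (Fin m)} {i : Fin m} :
    i ∈ D.image Fin.rev ↔ i.rev ∈ D := by
  simp only [Finset.mem_image]
  constructor
  · rintro ⟨d, hd, rfl⟩; rwa [Fin.rev_rev]
  · intro h; exact ⟨i.rev, h, Fin.rev_rev i⟩

lemma isInit_image_rev {m : ℕ} {D : Finset (Fin m)} : IsInit (D.image Fin.rev) ↔ IsFin D := by
  constructor
  · intro h i j hij hi
    have := h j.rev i.rev (Fin.rev_le_rev.mpr hij) (mem_image_rev.mpr (by rwa [Fin.rev_rev]))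
    rw [mem_image_rev, Fin.rev_rev] at this
    exact this
  · intro h i j hij hj
    rw [mem_image_rev] at hj ⊢
    exact h j.rev i.rev (Fin.rev_le_rev.mpr hij) hj

lemma isFin_image_rev {m : ℕ} {D : Finset (Fin m)} : IsFin (D.image Fin.rev) ↔ IsInit D := by
  constructor
  · intro h i j hij hj
    have := h j.rev i.rev (Fin.rev_le_rev.mpr hij) (mem_image_rev.mpr (by rwa [Fin.rev_rev]))
    rw [mem_image_rev, Fin.rev_rev] at this
    exact this
  · intro h i j hij hi
    rw [mem_image_rev] at hi ⊢
    exact h j.rev i.rev (Fin.rev_le_rev.mpr hij) hi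

lemma image_rev_ne_empty {m : ℕ} {D : Finset (Fin m)} (h : D ≠ ∅) : D.image Fin.rev ≠ ∅ := by
  rw [← Finset.nonempty_iff_ne_empty] at h ⊢
  exact h.image _

lemma image_rev_ne_univ {m : ℕ} {D : Finset (Fin m)} (h : D ≠ Finset.univ) :
    D.image Fin.rev ≠ Finset.univ := by
  intro hc
  apply h
  ext i
  simp only [Finset.mem_univ, iff_true]
  have : i.rev ∈ D.image Fin.rev := hc ▸ Finset.mem_univ _
  rwa [mem_image_rev, Fin.rev_rev] at this

end Mirror

section Witness

lemma witness : ∀ (n : ℕ) (D : Finset (Fin (n+1))), D ≠ ∅ → D ≠ Finset.univ →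
    ∀ k : Fin (n+1), ¬(k = 0 ∧ IsInit D) → ¬((k : ℕ) = n ∧ IsFin D) →
    ∃ (σ : Equiv.Perm (Fin (n+2))) (P Q : Fin (n+2)),
      Des σ = D ∧ σ P = k.castSucc ∧ σ Q = k.succ ∧
      ((P : ℕ) + 2 ≤ (Q : ℕ) ∨ (Q : ℕ) + 2 ≤ (P : ℕ))
  | 0, D, hne, hnu, k, _, _ => by
    exfalso
    apply hnu
    rw [← Finset.nonempty_iff_ne_empty] at hne
    obtain ⟨d, hd⟩ := hne
    apply Finset.eq_univ_of_forall
    intro i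
    have h1 := i.isLt
    have h2 := d.isLt
    have : i = d := by apply Fin.ext; omega
    rwa [this]
  | (n+1), D, hne, hnu, k, h0, hl => by
    have caseA : ∀ (D : Finset (Fin (n+2))), Fin.last (n+1) ∉ D → D ≠ ∅ → D ≠ Finset.univ →
        ∀ k : Fin (n+2), ¬(k = 0 ∧ IsInit D) → ¬((k : ℕ) = n+1 ∧ IsFin D) →
        ∃ (σ : Equiv.Perm (Fin (n+3))) (P Q : Fin (n+3)),
          Des σ = D ∧ σ P = k.castSucc ∧ σ Q = k.succ ∧
          ((P : ℕ) + 2 ≤ (Q : ℕ) ∨ (Q : ℕ) + 2 ≤ (P : ℕ)) := by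
      intro D hlast hne hnu k h0 hl
      have hne' : Dlow D ≠ ∅ := by
        rw [← Finset.nonempty_iff_ne_empty]
        exact dlow_nonempty (Finset.nonempty_iff_ne_empty.mpr hne) hlast
      by_cases hDu' : Dlow D = Finset.univ
      · -- E1 : D is everything except the last index
        have hshape : ∀ i : Fin (n+2), i ∈ D ↔ (i : ℕ) < n + 1 := by
          intro i
          induction i using Fin.lastCases with
          | last =>
            simp only [Fin.val_last]
            constructor
            · intro h; exact absurd h hlast
            · omega
          | cast j =>
            have hj : j ∈ Dlow D := hDu' ▸ Finset.mem_univ j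
            rw [mem_Dlow] at hj
            simp only [Fin.coe_castSucc, hj, true_iff]
            exact j.isLt
        have hInit : IsInit D := by
          intro i j hij hj
          rw [hshape] at hj ⊢
          have := Fin.le_def.mp hij
          omega
        have hk1 : 1 ≤ (k : ℕ) := by
          rcases Nat.eq_zero_or_pos (k : ℕ) with h | h
          · exact absurd ⟨Fin.ext (by simpa using h), hInit⟩ h0
          · exact h
        exact witE1 (n+1) D hshape k hk1
      · by_cases hktop : (k : ℕ) = n + 1
        · obtain ⟨σ', hdes', hpos'⟩ :=
            exists_perm_des_top n (Dlow D) (Finset.nonempty_iff_ne_empty.mpr hne')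
          refine ⟨insLast σ' (Fin.last (n+2)), (σ'⁻¹ (Fin.last (n+1))).castSucc,
            Fin.last (n+2), ?_, ?_, ?_, ?_⟩
          · apply des_insLast_eq hdes'
            simp only [Fin.val_last]
            constructor
            · intro h; exact absurd (lt_of_le_of_lt h (Fin.is_lt _)) (by omega)
            · intro h; exact absurd h hlast
          · rw [insLast_apply_castSucc, show σ' (σ'⁻¹ (Fin.last (n+1))) = Fin.last (n+1) from Equiv.apply_symm_apply _ _]
            apply Fin.ext
            rw [succAbove_val]
            simp only [Fin.val_last, Fin.coe_castSucc, hktop]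
            rw [if_pos (by omega)]
          · rw [insLast_apply_last]
            apply Fin.ext
            simp only [Fin.val_last, Fin.val_succ, hktop]
          · left
            simp only [Fin.coe_castSucc, Fin.val_last]
            omega
        · set k' : Fin (n+1) := ⟨(k : ℕ), by have := k.isLt; omega⟩ with hk'def
          by_cases hfin' : ((k' : ℕ) = n ∧ IsFin (Dlow D))
          · -- E3
            obtain ⟨hkn, hF⟩ := hfin'
            have hDne : D.Nonempty := Finset.nonempty_iff_ne_empty.mpr hne
            set a : ℕ := ((D.min' hDne : Fin (n+2)) : ℕ) with ha
            have hamem : D.min' hDne ∈ D := Finset.min'_mem _ _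
            have haneq : D.min' hDne ≠ Fin.last (n+1) := fun h => hlast (h ▸ hamem)
            have haval : a < n + 1 := by
              have h1 := Fin.is_le (D.min' hDne)
              rcases Nat.lt_or_ge a (n+1) with h | h
              · exact h
              · exfalso; apply haneq; apply Fin.ext; simp only [Fin.val_last]; omega
            have hshape : ∀ i : Fin (n+2), i ∈ D ↔ (a ≤ (i : ℕ) ∧ (i : ℕ) < n + 1) := by
              intro i
              constructor
              · intro hi
                have h1 : D.min' hDne ≤ i := Finset.min'_le _ _ hi
                have h2 : i ≠ Fin.last (n+1) := fun h => hlast (h ▸ hi)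
                have h3 : (i : ℕ) ≠ n + 1 := fun h => h2 (Fin.ext (by simpa using h))
                have h4 := i.isLt
                exact ⟨Fin.le_def.mp h1, by omega⟩
              · rintro ⟨h1, h2⟩
                have hmne : D.min' hDne ≠ Fin.last (n+1) := haneq
                have hj1 : ((D.min' hDne).castPred hmne) ∈ Dlow D := by
                  rw [mem_Dlow, Fin.castSucc_castPred]; exact hamem
                have hine : i ≠ Fin.last (n+1) := fun h => by
                  rw [h] at h2; simp at h2
                have hle : ((D.min' hDne).castPred hmne) ≤ (i.castPred hine) := by
                  rw [Fin.le_def]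
                  simp only [Fin.coe_castPred]
                  exact h1
                have := hF _ _ hle hj1
                rw [mem_Dlow, Fin.castSucc_castPred] at this
                exact this
            have ha1 : 1 ≤ a := by
              by_contra h
              apply hDu'
              apply Finset.eq_univ_of_forall
              intro j
              rw [mem_Dlow, hshape]
              constructor
              · omega
              · simp only [Fin.coe_castSucc]; exact j.isLt
            refine witE3 (n+1) a D hshape ha1 haval k ?_
            have : (k' : ℕ) = (k : ℕ) := rfl
            omega
          · -- inductive case
            have h0' : ¬(k' = 0 ∧ IsInit (Dlow D)) := by
              rintro ⟨hk'0, hInit'⟩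
              apply h0
              constructor
              · apply Fin.ext
                have := congrArg Fin.val hk'0
                have h2 : (k' : ℕ) = (k : ℕ) := rfl
                simp only [Fin.val_zero] at this ⊢
                omega
              · intro i j hij hj
                have hjne : j ≠ Fin.last (n+1) := fun h => hlast (h ▸ hj)
                have hine : i ≠ Fin.last (n+1) := by
                  intro h
                  apply hjne
                  apply Fin.ext
                  have h1 := Fin.le_def.mp hij
                  have h2 := j.isLt
                  have h3 := congrArg Fin.val h
                  simp only [Fin.val_last] at h3 ⊢
                  omega
                have hj' : (j.castPred hjne) ∈ Dlow D := by
                  rw [mem_Dlow, Fin.castSucc_castPred]; exact hj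
                have hle : (i.castPred hine) ≤ (j.castPred hjne) := by
                  rw [Fin.le_def]; simp only [Fin.coe_castPred]; exact Fin.le_def.mp hij
                have := hInit' _ _ hle hj'
                rw [mem_Dlow, Fin.castSucc_castPred] at this
                exact this
            obtain ⟨σ', P', Q', hdes', hP', hQ', hPQ'⟩ :=
              witness n (Dlow D) hne' hDu' k' h0' hfin'
            refine ⟨insLast σ' (Fin.last (n+2)), P'.castSucc, Q'.castSucc, ?_, ?_, ?_, ?_⟩
            · apply des_insLast_eq hdes'
              simp only [Fin.val_last]
              constructor
              · intro h; exact absurd (lt_of_le_of_lt h (Fin.is_lt _)) (by omega)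
              · intro h; exact absurd h hlast
            · rw [insLast_apply_castSucc, hP']
              apply Fin.ext
              rw [succAbove_val]
              simp only [Fin.coe_castSucc, Fin.val_last]
              rw [if_pos (by have := k'.isLt; omega)]
            · rw [insLast_apply_castSucc, hQ']
              apply Fin.ext
              rw [succAbove_val]
              simp only [Fin.val_succ, Fin.val_last]
              rw [if_pos (by have := k'.isLt; omega)]
            · simp only [Fin.coe_castSucc]
              exact hPQ'
    by_cases hLD : Fin.last (n+1) ∈ D
    · by_cases h0D : (0 : Fin (n+2)) ∈ D
      · -- case C
        have hkpos : k ≠ 0 → 1 ≤ (k : ℕ) := by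
          intro h
          rcases Nat.eq_zero_or_pos (k : ℕ) with hh | hh
          · exact absurd (Fin.ext (by simpa using hh)) h
          · exact hh
        have hD'0 : (0 : Fin (n+1)) ∈ Dlow D := by
          rw [mem_Dlow]
          simpa using h0D
        have hnu' : Dlow D ≠ Finset.univ := dlow_ne_univ hLD hnu
        have hne' : Dlow D ≠ ∅ := by
          rw [← Finset.nonempty_iff_ne_empty]; exact ⟨0, hD'0⟩
        by_cases hk0 : k = 0
        · obtain ⟨σ', hdes', hpos'⟩ := exists_perm_des_bot n (Dlow D) hnu'
          refine ⟨insLast σ' 0, Fin.last (n+2), (σ'⁻¹ 0).castSucc, ?_, ?_, ?_, ?_⟩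
          · apply des_insLast_eq hdes'
            simpa using hLD
          · rw [insLast_apply_last]
            rw [hk0]
            rfl
          · rw [insLast_apply_castSucc, show σ' (σ'⁻¹ 0) = 0 from Equiv.apply_symm_apply _ _]
            apply Fin.ext
            rw [succAbove_val]
            rw [hk0]
            simp
          · right
            simp only [Fin.coe_castSucc, Fin.val_last]
            omega
        · have hk1 : 1 ≤ (k : ℕ) := hkpos hk0
          set k' : Fin (n+1) := ⟨(k : ℕ) - 1, by have := k.isLt; omega⟩ with hk'def
          by_cases hE4 : ((k : ℕ) = 1 ∧ IsInit (Dlow D))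
          · obtain ⟨hkv1, hInit'⟩ := hE4
            have hD'ne : (Dlow D).Nonempty := ⟨0, hD'0⟩
            set t : ℕ := (((Dlow D).max' hD'ne : Fin (n+1)) : ℕ) with ht
            have htmem := Finset.max'_mem (Dlow D) hD'ne
            have htle : ∀ j ∈ Dlow D, (j : ℕ) ≤ t := fun j hj => Finset.le_max' _ j hj
            have htn : t + 2 ≤ n + 1 := by
              by_contra hcon
              apply hnu'
              apply Finset.eq_univ_of_forall
              intro j
              refine hInit' j ((Dlow D).max' hD'ne) ?_ htmem
              rw [Fin.le_def]
              have := j.isLt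
              omega
            have hshape : ∀ i : Fin (n+2), i ∈ D ↔ ((i : ℕ) ≤ t ∨ (i : ℕ) = n + 1) := by
              intro i
              induction i using Fin.lastCases with
              | last =>
                constructor
                · intro _; right; rw [Fin.val_last]
                · intro _; exact hLD
              | cast j =>
                simp only [Fin.coe_castSucc]
                constructor
                · intro hj
                  left
                  exact htle j (mem_Dlow.mpr hj)
                · intro hj
                  rcases hj with hj | hj
                  · have hle : j ≤ (Dlow D).max' hD'ne := by rw [Fin.le_def]; omega
                    have := hInit' j _ hle htmem
                    exact mem_Dlow.mp this
                  · exfalso; have := j.isLt; omega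
            exact witE4 (n+1) t D hshape htn k hkv1
          · have h0' : ¬(k' = 0 ∧ IsInit (Dlow D)) := by
              rintro ⟨hk'0, hInit'⟩
              apply hE4
              refine ⟨?_, hInit'⟩
              have h1 := congrArg Fin.val hk'0
              have h2 : (k' : ℕ) = (k : ℕ) - 1 := rfl
              simp only [Fin.val_zero] at h1
              omega
            have hl' : ¬((k' : ℕ) = n ∧ IsFin (Dlow D)) := by
              rintro ⟨_, hFin'⟩
              apply hnu'
              apply Finset.eq_univ_of_forall
              intro j
              refine hFin' 0 j ?_ hD'0
              rw [Fin.le_def]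
              simp
            obtain ⟨σ', P', Q', hdes', hP', hQ', hPQ'⟩ :=
              witness n (Dlow D) hne' hnu' k' h0' hl'
            refine ⟨insLast σ' 0, P'.castSucc, Q'.castSucc, ?_, ?_, ?_, ?_⟩
            · apply des_insLast_eq hdes'
              simpa using hLD
            · rw [insLast_apply_castSucc, hP']
              apply Fin.ext
              rw [succAbove_val]
              simp only [Fin.coe_castSucc, Fin.val_zero]
              simp only [Nat.not_lt_zero, if_false]
              show ((k' : ℕ)) + 1 = (k : ℕ)
              simp only [hk'def]
              omega
            · rw [insLast_apply_castSucc, hQ']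
              apply Fin.ext
              rw [succAbove_val]
              simp only [Fin.val_succ, Fin.val_zero]
              simp only [Nat.not_lt_zero, if_false]
              show ((k' : ℕ) + 1) + 1 = (k : ℕ) + 1
              simp only [hk'def]
              omega
            · simp only [Fin.coe_castSucc]
              exact hPQ'
      · -- case B : mirror of case A
        have hrevlast : Fin.last (n+1) ∉ D.image Fin.rev := by
          rw [mem_image_rev]
          intro hc
          apply h0D
          have : (Fin.last (n+1)).rev = (0 : Fin (n+2)) := by
            apply Fin.ext
            rw [Fin.val_rev]
            simp
          rwa [this] at hc
        have h0rev : ¬(k.rev = 0 ∧ IsInit (D.image Fin.rev)) := by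
          rintro ⟨hkr, hIr⟩
          apply hl
          constructor
          · have := congrArg Fin.val hkr
            rw [Fin.val_rev] at this
            simp only [Fin.val_zero] at this
            have := k.isLt
            omega
          · exact isInit_image_rev.mp hIr
        have hlrev : ¬((k.rev : ℕ) = n + 1 ∧ IsFin (D.image Fin.rev)) := by
          rintro ⟨hkr, hFr⟩
          apply h0
          constructor
          · apply Fin.ext
            rw [Fin.val_rev] at hkr
            have := k.isLt
            simp only [Fin.val_zero]
            omega
          · exact isFin_image_rev.mp hFr
        obtain ⟨σ₁, P₁, Q₁, hdes₁, hP₁, hQ₁, hPQ₁⟩ :=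
          caseA (D.image Fin.rev) hrevlast (image_rev_ne_empty hne) (image_rev_ne_univ hnu)
            k.rev h0rev hlrev
        refine ⟨conjRev σ₁, Q₁.rev, P₁.rev, ?_, ?_, ?_, ?_⟩
        · ext i
          rw [mem_des_conjRev, hdes₁, mem_image_rev, Fin.rev_rev]
        · rw [conjRev_apply, Fin.rev_rev, hQ₁, Fin.rev_succ, Fin.rev_rev]
        · rw [conjRev_apply, Fin.rev_rev, hP₁, Fin.rev_castSucc, Fin.rev_rev]
        · have h1 : (Q₁.rev : ℕ) = n + 2 - (Q₁ : ℕ) := by rw [Fin.val_rev]; omega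
          have h2 : (P₁.rev : ℕ) = n + 2 - (P₁ : ℕ) := by rw [Fin.val_rev]; omega
          have h3 := P₁.isLt
          have h4 := Q₁.isLt
          omega
    · exact caseA D hLD hne hnu k h0 hl

end Witness

section SwapLemma

lemma swap_lt_iff {m : ℕ} {u v x y : Fin m} (huv : (u : ℕ) + 1 = (v : ℕ))
    (h1 : ¬(x = u ∧ y = v)) (h2 : ¬(x = v ∧ y = u)) :
    (Equiv.swap u v x < Equiv.swap u v y ↔ x < y) := by
  have hsw : ∀ z : Fin m, ((Equiv.swap u v z : Fin m) : ℕ) =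
      if (z : ℕ) = (u : ℕ) then (v : ℕ) else if (z : ℕ) = (v : ℕ) then (u : ℕ) else (z : ℕ) := by
    intro z
    rw [Equiv.swap_apply_def]
    split_ifs <;> simp_all [Fin.ext_iff]
  simp only [Fin.ext_iff] at h1 h2
  rw [Fin.lt_def, Fin.lt_def, hsw, hsw]
  split_ifs <;> omega

lemma des_swap_mul {n : ℕ} (σ : Equiv.Perm (Fin (n+2))) (k : Fin (n+1)) (P Q : Fin (n+2))
    (hP : σ P = k.castSucc) (hQ : σ Q = k.succ)
    (hPQ : (P : ℕ) + 2 ≤ (Q : ℕ) ∨ (Q : ℕ) + 2 ≤ (P : ℕ)) :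
    Des (Equiv.swap k.castSucc k.succ * σ) = Des σ := by
  ext i
  rw [mem_Des, mem_Des]
  have happ : ∀ x, (Equiv.swap k.castSucc k.succ * σ) x = Equiv.swap k.castSucc k.succ (σ x) :=
    fun x => rfl
  rw [happ, happ]
  apply swap_lt_iff
  · simp
  · rintro ⟨ha, hb⟩
    have hiP : i.succ = P := σ.injective (by rw [ha, hP])
    have hiQ : i.castSucc = Q := σ.injective (by rw [hb, hQ])
    have h1 := congrArg Fin.val hiP
    have h2 := congrArg Fin.val hiQ
    simp only [Fin.val_succ, Fin.coe_castSucc] at h1 h2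
    omega
  · rintro ⟨ha, hb⟩
    have hiP : i.castSucc = P := σ.injective (by rw [hb, hP])
    have hiQ : i.succ = Q := σ.injective (by rw [ha, hQ])
    have h1 := congrArg Fin.val hiP
    have h2 := congrArg Fin.val hiQ
    simp only [Fin.val_succ, Fin.coe_castSucc] at h1 h2
    omega

end SwapLemma

section Generation

/-- adjacent transpositions generate the symmetric group -/
lemma closure_adjacent (m : ℕ) :
    Subgroup.closure {π : Equiv.Perm (Fin (m+1)) | ∃ k : Fin m, π = Equiv.swap k.castSucc k.succ}
      = ⊤ := by
  have base : ∀ (a b : Fin (m+1)), (a : ℕ) + 1 = (b : ℕ) →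
      Equiv.swap a b ∈ Subgroup.closure
        {π : Equiv.Perm (Fin (m+1)) | ∃ k : Fin m, π = Equiv.swap k.castSucc k.succ} := by
    intro a b hab
    apply Subgroup.subset_closure
    have ha : (a : ℕ) < m := by have := b.isLt; omega
    refine ⟨⟨(a : ℕ), ha⟩, ?_⟩
    have e1 : (⟨(a : ℕ), ha⟩ : Fin m).castSucc = a := by apply Fin.ext; rfl
    have e2 : (⟨(a : ℕ), ha⟩ : Fin m).succ = b := by
      apply Fin.ext; simp only [Fin.val_succ]; omega
    rw [e1, e2]
  have aux : ∀ (d : ℕ) (a b : Fin (m+1)), (a : ℕ) + d + 1 = (b : ℕ) →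
      Equiv.swap a b ∈ Subgroup.closure
        {π : Equiv.Perm (Fin (m+1)) | ∃ k : Fin m, π = Equiv.swap k.castSucc k.succ} := by
    intro d
    induction d with
    | zero => exact base
    | succ d ih =>
      intro a b hab
      have hbpos : (b : ℕ) = (a : ℕ) + d + 2 := by omega
      set c : Fin (m+1) := ⟨(a : ℕ) + d + 1, by have := b.isLt; omega⟩ with hc
      have hcb : Equiv.swap c b ∈ _ := base c b (by simp only [hc]; omega)
      have hac : Equiv.swap a c ∈ _ := ih a c (by simp only [hc])
      have hkey : Equiv.swap a b = Equiv.swap c b * Equiv.swap a c * (Equiv.swap c b)⁻¹ := by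
        rw [← Equiv.swap_apply_apply]
        congr 1
        · rw [Equiv.swap_apply_of_ne_of_ne]
          · intro h; have := congrArg Fin.val h; simp only [hc] at this; omega
          · intro h; have := congrArg Fin.val h; omega
        · rw [Equiv.swap_apply_left]
      rw [hkey]
      exact mul_mem (mul_mem hcb hac) (inv_mem hcb)
  rw [eq_top_iff, ← Equiv.Perm.closure_isSwap]
  rw [Subgroup.closure_le]
  rintro f ⟨x, y, hxy, rfl⟩
  rcases Ne.lt_or_gt hxy with h | h
  · have := Fin.lt_def.mp h
    exact SetLike.mem_coe.mpr (aux ((y : ℕ) - (x : ℕ) - 1) x y (by omega))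
  · have := Fin.lt_def.mp h
    rw [Equiv.swap_comm]
    exact SetLike.mem_coe.mpr (aux ((x : ℕ) - (y : ℕ) - 1) y x (by omega))

lemma gen_aux (n : ℕ) (D : Finset (Fin (n+1))) (hne : D ≠ ∅) (hnu : D ≠ Finset.univ)
    (hnf : ¬ IsFin D) :
    Subgroup.closure {σ : Equiv.Perm (Fin (n+2)) | Des σ = D} = ⊤ := by
  set H := Subgroup.closure {σ : Equiv.Perm (Fin (n+2)) | Des σ = D} with hH
  have hswap : ∀ k : Fin (n+1), ¬(k = 0 ∧ IsInit D) →
      Equiv.swap k.castSucc k.succ ∈ H := by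
    intro k hk
    obtain ⟨σ, P, Q, hdes, hP, hQ, hPQ⟩ := witness n D hne hnu k hk (fun h => hnf h.2)
    have hτ : Des (Equiv.swap k.castSucc k.succ * σ) = D := by
      rw [des_swap_mul σ k P Q hP hQ hPQ]; exact hdes
    have h1 : σ ∈ H := Subgroup.subset_closure hdes
    have h2 : Equiv.swap k.castSucc k.succ * σ ∈ H := Subgroup.subset_closure hτ
    have h3 : Equiv.swap k.castSucc k.succ = (Equiv.swap k.castSucc k.succ * σ) * σ⁻¹ := by
      group
    rw [h3]
    exact mul_mem h2 (inv_mem h1)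
  have hall : ∀ k : Fin (n+1), Equiv.swap k.castSucc k.succ ∈ H := by
    intro k
    by_cases hI : IsInit D
    · by_cases hk0 : k = 0
      · -- use the BA witness and conjugation
        have hDne : D.Nonempty := Finset.nonempty_iff_ne_empty.mpr hne
        set t : ℕ := ((D.max' hDne : Fin (n+1)) : ℕ) with ht
        have htmem := Finset.max'_mem D hDne
        have hshape : ∀ i : Fin (n+1), i ∈ D ↔ (i : ℕ) ≤ t := by
          intro i
          constructor
          · intro hi
            exact Fin.le_def.mp (Finset.le_max' D i hi)
          · intro hi
            exact hI i (D.max' hDne) (by rw [Fin.le_def]; omega) htmem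
        have htn : t + 1 ≤ n := by
          by_contra hcon
          apply hnu
          apply Finset.eq_univ_of_forall
          intro i
          rw [hshape]
          have h1 := i.isLt
          have h2 := (D.max' hDne).isLt
          omega
        obtain ⟨σ0, hdes0, h0a, h0b⟩ := witBA n t D hshape htn
        set j0 : Fin (n+1) := ⟨t+1, by omega⟩ with hj0
        have hj0mem : Equiv.swap j0.castSucc j0.succ ∈ H := by
          apply hswap
          rintro ⟨h, -⟩
          have := congrArg Fin.val h
          simp only [hj0, Fin.val_zero] at this
          omega
        have e1 : σ0 j0.castSucc = k.castSucc := by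
          rw [hk0]
          have : j0.castSucc = (⟨t+1, by omega⟩ : Fin (n+2)) := by apply Fin.ext; rfl
          rw [this, h0a]
          apply Fin.ext
          rfl
        have e2 : σ0 j0.succ = k.succ := by
          rw [hk0]
          have : j0.succ = (⟨t+2, by omega⟩ : Fin (n+2)) := by
            apply Fin.ext; simp only [Fin.val_succ, hj0]
          rw [this, h0b]
          apply Fin.ext
          rfl
        have hkey : Equiv.swap k.castSucc k.succ
            = σ0 * Equiv.swap j0.castSucc j0.succ * σ0⁻¹ := by
          rw [← Equiv.swap_apply_apply, e1, e2]
        rw [hkey]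
        exact mul_mem (mul_mem (Subgroup.subset_closure hdes0) hj0mem)
          (inv_mem (Subgroup.subset_closure hdes0))
      · exact hswap k (fun h => hk0 h.1)
    · exact hswap k (fun h => hI h.2)
  rw [eq_top_iff, ← closure_adjacent (n+1), Subgroup.closure_le]
  rintro f ⟨k, rfl⟩
  exact hall k

lemma des_conjRev_eq {n : ℕ} (σ : Equiv.Perm (Fin (n+1))) :
    Des (conjRev σ) = (Des σ).image Fin.rev := by
  ext i
  rw [mem_des_conjRev, mem_image_rev]

lemma conjRev_conjRev {m : ℕ} (σ : Equiv.Perm (Fin m)) : conjRev (conjRev σ) = σ := by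
  ext x
  simp only [conjRev_apply, Fin.rev_rev]

theorem closure_des_class (n : ℕ) (D : Finset (Fin (n+1))) (hne : D ≠ ∅)
    (hnu : D ≠ Finset.univ) :
    Subgroup.closure {σ : Equiv.Perm (Fin (n+2)) | Des σ = D} = ⊤ := by
  by_cases hnf : IsFin D
  · -- mirror
    have hnI : ¬ IsInit D := by
      intro hI
      apply hnu
      obtain ⟨d, hd⟩ := Finset.nonempty_iff_ne_empty.mpr hne
      apply Finset.eq_univ_of_forall
      intro i
      rcases le_total i d with h | h
      · exact hI i d h hd
      · exact hnf d i h hd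
    have hD' : ¬ IsFin (D.image Fin.rev) := by
      rw [isFin_image_rev]
      exact hnI
    have hgen : Subgroup.closure {σ : Equiv.Perm (Fin (n+2)) | Des σ = D.image Fin.rev} = ⊤ :=
      gen_aux n (D.image Fin.rev) (image_rev_ne_empty hne) (image_rev_ne_univ hnu) hD'
    -- transfer through conjugation by revPerm
    have himg : (fun σ => conjRev σ) '' {σ : Equiv.Perm (Fin (n+2)) | Des σ = D.image Fin.rev}
        = {σ : Equiv.Perm (Fin (n+2)) | Des σ = D} := by
      ext g
      simp only [Set.mem_image, Set.mem_setOf_eq]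
      constructor
      · rintro ⟨σ, hσ, rfl⟩
        rw [des_conjRev_eq, hσ]
        ext i
        rw [mem_image_rev, mem_image_rev, Fin.rev_rev]
      · intro hg
        refine ⟨conjRev g, ?_, conjRev_conjRev g⟩
        rw [des_conjRev_eq, hg]
    have hmono : ∀ S : Set (Equiv.Perm (Fin (n+2))), ∀ g ∈ Subgroup.closure S,
        conjRev g ∈ Subgroup.closure ((fun σ => conjRev σ) '' S) := by
      intro S g hg
      induction hg using Subgroup.closure_induction with
      | mem x hx => exact Subgroup.subset_closure ⟨x, hx, rfl⟩
      | one =>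
        have : conjRev (1 : Equiv.Perm (Fin (n+2))) = 1 := by
          ext x; simp [conjRev_apply, Fin.rev_rev]
        rw [this]; exact one_mem _
      | mul x y hx hy ihx ihy =>
        have : conjRev (x * y) = conjRev x * conjRev y := by
          ext z; simp [conjRev_apply, Fin.rev_rev, Equiv.Perm.mul_apply]
        rw [this]; exact mul_mem ihx ihy
      | inv x hx ihx =>
        have : conjRev x⁻¹ = (conjRev x)⁻¹ := by
          rw [← mul_eq_one_iff_eq_inv]
          ext z; simp [conjRev_apply, Fin.rev_rev, Equiv.Perm.mul_apply]
        rw [this]; exact inv_mem ihx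
    rw [eq_top_iff]
    intro g _
    have hg' : conjRev g ∈ Subgroup.closure {σ : Equiv.Perm (Fin (n+2)) | Des σ = D.image Fin.rev} := by
      rw [hgen]; exact Subgroup.mem_top _
    have := hmono _ _ hg'
    rw [himg] at this
    rwa [conjRev_conjRev] at this
  · exact gen_aux n D hne hnu hnf

end Generation

/-- if `W` is a probability distribution on `S_{n+1}` which is
constant on descent classes and puts positive mass on some permutation whose
descent set is neither empty nor full, then every fixed vector of the left
random walk driven by `W` is constant; consequently the uniform distribution
is the unique stationary distribution. -/
theorem unique_stationary_uniform (n : ℕ)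
    (W : Equiv.Perm (Fin (n + 1)) → ℝ)
    (hW0 : ∀ σ, 0 ≤ W σ) (hW1 : ∑ σ, W σ = 1)
    (hWclass : ∀ σ τ, Des σ = Des τ → W σ = W τ)
    (hτ : ∃ τ₀ : Equiv.Perm (Fin (n + 1)),
      0 < W τ₀ ∧ Des τ₀ ≠ ∅ ∧ Des τ₀ ≠ Finset.univ) :
    (∀ u : Equiv.Perm (Fin (n + 1)) → ℝ,
      (∀ γ, u γ = ∑ σ, W σ * u (σ⁻¹ * γ)) → ∃ c : ℝ, ∀ γ, u γ = c) ∧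
    (∀ ν : Equiv.Perm (Fin (n + 1)) → ℝ,
      ((∀ γ, 0 ≤ ν γ) ∧ (∑ γ, ν γ = 1) ∧ (∀ γ, ν γ = ∑ σ, W σ * ν (σ⁻¹ * γ))) ↔
      (∀ γ, ν γ = (Nat.factorial (n + 1) : ℝ)⁻¹)) := by
  obtain ⟨τ₀, hWτ, hDne, hDnu⟩ := hτ
  have hcl : Subgroup.closure {σ : Equiv.Perm (Fin (n+1)) | Des σ = Des τ₀} = ⊤ := by
    cases n with
    | zero =>
      exfalso
      apply hDne
      exact Finset.eq_empty_of_forall_notMem (fun i => i.elim0)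
    | succ m => exact closure_des_class m (Des τ₀) hDne hDnu
  have key : ∀ u : Equiv.Perm (Fin (n+1)) → ℝ,
      (∀ γ, u γ = ∑ σ, W σ * u (σ⁻¹ * γ)) → ∃ c : ℝ, ∀ γ, u γ = c := by
    intro u hu
    obtain ⟨x0, -, hx0⟩ := Finset.exists_max_image (Finset.univ : Finset (Equiv.Perm (Fin (n+1))))
      u ⟨1, Finset.mem_univ 1⟩
    set c := u x0 with hc
    set M : Finset (Equiv.Perm (Fin (n+1))) := Finset.univ.filter (fun γ => u γ = c) with hM
    have hmemM : ∀ γ, γ ∈ M ↔ u γ = c := by intro γ; simp [hM]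
    have hx0M : x0 ∈ M := (hmemM x0).mpr rfl
    have hstep : ∀ γ, γ ∈ M → ∀ σ, W σ ≠ 0 → σ⁻¹ * γ ∈ M := by
      intro γ hγ σ hσ
      have hγc : u γ = c := (hmemM γ).mp hγ
      have hle : ∀ τ : Equiv.Perm (Fin (n+1)), u (τ⁻¹ * γ) ≤ c :=
        fun τ => hx0 _ (Finset.mem_univ _)
      have hsum0 : ∑ τ : Equiv.Perm (Fin (n+1)), W τ * (c - u (τ⁻¹ * γ)) = 0 := by
        have hexp : ∑ τ : Equiv.Perm (Fin (n+1)), W τ * (c - u (τ⁻¹ * γ))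
            = (∑ τ : Equiv.Perm (Fin (n+1)), W τ * c)
              - ∑ τ : Equiv.Perm (Fin (n+1)), W τ * u (τ⁻¹ * γ) := by
          rw [← Finset.sum_sub_distrib]
          apply Finset.sum_congr rfl
          intro τ _
          ring
        rw [hexp, ← Finset.sum_mul, hW1, one_mul, ← hu γ, hγc, sub_self]
      have hnonneg : ∀ τ ∈ (Finset.univ : Finset (Equiv.Perm (Fin (n+1)))),
          0 ≤ W τ * (c - u (τ⁻¹ * γ)) := by
        intro τ _
        exact mul_nonneg (hW0 τ) (by have := hle τ; linarith)
      have hzero := (Finset.sum_eq_zero_iff_of_nonneg hnonneg).mp hsum0 σ (Finset.mem_univ σ)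
      rw [hmemM]
      rcases mul_eq_zero.mp hzero with h | h
      · exact absurd h hσ
      · linarith
    have hstepgrp : ∀ g : Equiv.Perm (Fin (n+1)),
        g ∈ Subgroup.closure {σ : Equiv.Perm (Fin (n+1)) | Des σ = Des τ₀} →
        ∀ γ ∈ M, g⁻¹ * γ ∈ M := by
      intro g hg
      induction hg using Subgroup.closure_induction with
      | mem x hx =>
        intro γ hγ
        apply hstep γ hγ
        have hWx : W x = W τ₀ := hWclass x τ₀ hx
        rw [hWx]
        exact ne_of_gt hWτ
      | one =>
        intro γ hγ
        simpa using hγ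
      | mul x y hx hy ihx ihy =>
        intro γ hγ
        have hxy : (x * y)⁻¹ * γ = y⁻¹ * (x⁻¹ * γ) := by group
        rw [hxy]
        exact ihy _ (ihx _ hγ)
      | inv x hx ihx =>
        intro γ hγ
        have himg : M.image (fun δ => x⁻¹ * δ) = M := by
          apply Finset.eq_of_subset_of_card_le
          · intro z hz
            rw [Finset.mem_image] at hz
            obtain ⟨δ, hδ, rfl⟩ := hz
            exact ihx _ hδ
          · rw [Finset.card_image_of_injective _ (fun a b h => mul_left_cancel h)]
        have hγ' : γ ∈ M.image (fun δ => x⁻¹ * δ) := by rw [himg]; exact hγ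
        rw [Finset.mem_image] at hγ'
        obtain ⟨δ, hδ, hδγ⟩ := hγ'
        have : x⁻¹⁻¹ * γ = δ := by rw [← hδγ]; group
        rw [this]
        exact hδ
    refine ⟨c, fun γ => ?_⟩
    have hg := hstepgrp (x0 * γ⁻¹) (by rw [hcl]; exact Subgroup.mem_top _) x0 hx0M
    have heq : (x0 * γ⁻¹)⁻¹ * x0 = γ := by group
    rw [heq] at hg
    exact (hmemM γ).mp hg
  have hfactne : ((Nat.factorial (n+1) : ℕ) : ℝ) ≠ 0 := by
    exact_mod_cast Nat.factorial_ne_zero (n+1)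
  constructor
  · exact key
  · intro ν
    constructor
    · rintro ⟨hν0, hν1, hνs⟩
      obtain ⟨c, hc⟩ := key ν hνs
      intro γ
      rw [hc γ]
      have hsum : (1 : ℝ) = (Nat.factorial (n+1) : ℝ) * c := by
        rw [← hν1]
        calc ∑ δ : Equiv.Perm (Fin (n+1)), ν δ
            = ∑ _δ : Equiv.Perm (Fin (n+1)), c := Finset.sum_congr rfl (fun δ _ => hc δ)
          _ = (Fintype.card (Equiv.Perm (Fin (n+1))) : ℝ) * c := by
              rw [Finset.sum_const, Finset.card_univ, nsmul_eq_mul]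
          _ = (Nat.factorial (n+1) : ℝ) * c := by
              rw [Fintype.card_perm, Fintype.card_fin]
      field_simp
      linarith [hsum]
    · intro huni
      refine ⟨fun γ => ?_, ?_, fun γ => ?_⟩
      · rw [huni γ]
        positivity
      · calc ∑ γ : Equiv.Perm (Fin (n+1)), ν γ
            = ∑ _γ : Equiv.Perm (Fin (n+1)), ((Nat.factorial (n+1) : ℝ))⁻¹ :=
              Finset.sum_congr rfl (fun γ _ => huni γ)
          _ = (Fintype.card (Equiv.Perm (Fin (n+1))) : ℝ) * ((Nat.factorial (n+1) : ℝ))⁻¹ := by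
              rw [Finset.sum_const, Finset.card_univ, nsmul_eq_mul]
          _ = 1 := by
              rw [Fintype.card_perm, Fintype.card_fin]
              field_simp
      · rw [huni γ]
        have hterm : ∀ σ : Equiv.Perm (Fin (n+1)),
            W σ * ν (σ⁻¹ * γ) = W σ * ((Nat.factorial (n+1) : ℝ))⁻¹ :=
          fun σ => by rw [huni (σ⁻¹ * γ)]
        rw [Finset.sum_congr rfl (fun σ _ => hterm σ), ← Finset.sum_mul, hW1, one_mul]
end

section
/- For every integer n ≥ 1 and every natural number a, the following identity holds in ℚ: Σ ((−1)^{h−1}/h) · C(a, c_1)·C(a, c_2)⋯C(a, c_h) = (−1)^{n−1}·a/n, where the sum is over all compositions (c_1,…,c_h) of n (h being the length of the composition) and C(·,·) denotes the binomial coefficient. -/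
open PowerSeries Finset

noncomputable section

lemma coeff_one_add_X_pow (a n : ℕ) :
    PowerSeries.coeff (R := ℚ) n ((1 + PowerSeries.X) ^ a) = (a.choose n : ℚ) := by
  rw [add_comm (1 : ℚ⟦X⟧) PowerSeries.X, add_pow, map_sum]
  have h1 : ∀ k ∈ range (a + 1),
      PowerSeries.coeff (R := ℚ) n (PowerSeries.X ^ k * 1 ^ (a - k) * ((a.choose k : ℕ) : ℚ⟦X⟧))
        = if n = k then (a.choose k : ℚ) else 0 := by
    intro k _
    rw [one_pow, mul_one, ← map_natCast ((PowerSeries.C (R := ℚ))), PowerSeries.coeff_mul_C,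
      PowerSeries.coeff_X_pow]
    split <;> simp
  rw [Finset.sum_congr rfl h1]
  simp only [eq_comm (a := n)]
  rw [Finset.sum_ite_eq' (range (a + 1)) n fun k => (a.choose k : ℚ)]
  split
  · rfl
  · rename_i h
    rw [Nat.choose_eq_zero_of_lt, Nat.cast_zero]
    simpa using h

lemma composition_zero_blocks (c : Composition 0) : c.blocks = [] := by
  rcases hb : c.blocks with _ | ⟨x, xs⟩
  · rfl
  · exfalso
    have hs := c.blocks_sum
    rw [hb] at hs
    have hx : 0 < x := c.blocks_pos (by rw [hb]; exact List.mem_cons_self)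
    simp at hs
    omega

lemma sum_composition_zero (φ : List ℕ → ℚ) :
    ∑ c : Composition 0, φ c.blocks = φ [] := by
  have h : ∀ c : Composition 0, φ c.blocks = φ [] := fun c => by
    rw [composition_zero_blocks]
  rw [Finset.sum_congr rfl fun c _ => h c, Finset.sum_const]
  have hc : Fintype.card (Composition 0) = 1 := by rw [composition_card]; rfl
  rw [Finset.card_univ, hc, one_smul]

lemma comp_ext {n : ℕ} {c₁ c₂ : Composition n} (h : c₁.blocks = c₂.blocks) : c₁ = c₂ := by
  cases c₁; cases c₂; simp_all

/-- forward map: split off the first block -/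
def fB (n : ℕ) (c : Composition n) : Σ i : ℕ, Composition (n - i) :=
  ⟨c.blocks.headI,
    ⟨c.blocks.tail,
     fun hm => c.blocks_pos (List.mem_of_mem_tail hm),
     by
      rcases hb : c.blocks with _ | ⟨x, xs⟩
      · have := c.blocks_sum; rw [hb] at this; simp at this ⊢; omega
      · have := c.blocks_sum; rw [hb] at this; simp at this ⊢; omega⟩⟩

def gB (n : ℕ) (x : Σ i : ℕ, Composition (n - i)) (h1 : 1 ≤ x.1) (h2 : x.1 ≤ n) :
    Composition n :=
  ⟨x.1 :: x.2.blocks,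
   fun hm => by
     rcases List.mem_cons.mp hm with h | h
     · omega
     · exact x.2.blocks_pos h,
   by simp [x.2.blocks_sum]; omega⟩

lemma sum_composition_succ (n : ℕ) (hn : 0 < n) (φ : List ℕ → ℚ) :
    ∑ c : Composition n, φ c.blocks
      = ∑ x ∈ (Finset.Icc 1 n).sigma
          (fun i => (Finset.univ : Finset (Composition (n - i)))),
          φ (x.1 :: x.2.blocks) := by
  classical
  have hne : ∀ c : Composition n, c.blocks ≠ [] := by
    intro c h
    have := c.blocks_sum
    rw [h] at this
    simp at this
    omega
  refine Finset.sum_bij' (i := fun c _ => fB n c)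
    (j := fun x hx => gB n x ?_ ?_) ?_ ?_ ?_ ?_ ?_
  · exact (Finset.mem_Icc.mp (Finset.mem_sigma.mp hx).1).1
  · exact (Finset.mem_Icc.mp (Finset.mem_sigma.mp hx).1).2
  · -- maps to
    intro c _
    refine Finset.mem_sigma.mpr ⟨Finset.mem_Icc.mpr ⟨?_, ?_⟩, Finset.mem_univ _⟩
    · rcases hb : c.blocks with _ | ⟨x, xs⟩
      · exact absurd hb (hne c)
      · have h1 : 1 ≤ x := c.one_le_blocks (by rw [hb]; exact List.mem_cons_self)
        simp [fB, hb]
        omega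
    · have hs := c.blocks_sum
      rcases hb : c.blocks with _ | ⟨x, xs⟩
      · exact absurd hb (hne c)
      · rw [hb] at hs
        simp at hs
        simp [fB, hb]
        omega
  · intro x hx; exact Finset.mem_univ _
  · -- left inv : gB (fB c) = c
    intro c _
    apply comp_ext
    show c.blocks.headI :: c.blocks.tail = c.blocks
    rcases hb : c.blocks with _ | ⟨x, xs⟩
    · exact absurd hb (hne c)
    · simp
  · -- right inv : fB (gB x) = x
    intro x hx
    rcases x with ⟨i, c'⟩
    refine Sigma.ext rfl (heq_of_eq ?_)
    apply comp_ext
    rfl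
  · intro c _
    rcases hb : c.blocks with _ | ⟨x, xs⟩
    · exact absurd hb (hne c)
    · simp [fB, hb]

lemma sum_composition_length (f : ℚ⟦X⟧) (hf : PowerSeries.constantCoeff (R := ℚ) f = 0) :
    ∀ (h n : ℕ),
      ∑ c ∈ Finset.univ.filter (fun c : Composition n => c.length = h),
          (c.blocks.map fun b => PowerSeries.coeff (R := ℚ) b f).prod
        = PowerSeries.coeff (R := ℚ) n (f ^ h) := by
  intro h
  induction h with
  | zero =>
    intro n
    rcases Nat.eq_zero_or_pos n with rfl | hn
    · rw [Finset.sum_filter]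
      have h0 : ∀ c : Composition 0,
          (if c.length = 0 then ((c.blocks.map fun b => PowerSeries.coeff (R := ℚ) b f).prod) else 0)
          = (fun l : List ℕ =>
              if l.length = 0 then ((l.map fun b => PowerSeries.coeff (R := ℚ) b f).prod) else 0)
              c.blocks := fun c => by simp [Composition.length]
      rw [Finset.sum_congr rfl fun c _ => h0 c, sum_composition_zero
        (fun l => if l.length = 0 then ((l.map fun b => PowerSeries.coeff (R := ℚ) b f).prod) else 0)]
      simp
    · rw [pow_zero, PowerSeries.coeff_one, if_neg hn.ne']
      apply Finset.sum_eq_zero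
      intro c hc
      exact absurd (Finset.mem_filter.mp hc).2 (Composition.length_pos_of_pos c hn).ne'
  | succ h ih =>
    intro n
    rcases Nat.eq_zero_or_pos n with rfl | hn
    · have hr : PowerSeries.coeff (R := ℚ) 0 (f ^ (h + 1)) = 0 := by
        rw [PowerSeries.coeff_zero_eq_constantCoeff, map_pow, hf, zero_pow (Nat.succ_ne_zero h)]
      rw [hr]
      apply Finset.sum_eq_zero
      intro c hc
      have : c.length = 0 := by
        have := composition_zero_blocks c
        simp [Composition.length, this]
      rw [(Finset.mem_filter.mp hc).2] at this
      omega
    · set φ : List ℕ → ℚ := fun l =>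
        if l.length = h + 1 then ((l.map fun b => PowerSeries.coeff (R := ℚ) b f).prod) else 0 with hφ
      have h0 : ∀ c : Composition n,
          (if c.length = h + 1 then ((c.blocks.map fun b => PowerSeries.coeff (R := ℚ) b f).prod) else 0)
            = φ c.blocks := fun c => by simp [hφ, Composition.length]
      rw [Finset.sum_filter, Finset.sum_congr rfl fun c _ => h0 c,
        sum_composition_succ n hn φ, Finset.sum_sigma]
      have h1 : ∀ i ∈ Finset.Icc 1 n, ∀ c' : Composition (n - i),
          φ (i :: c'.blocks)
            = PowerSeries.coeff (R := ℚ) i f *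
              (if c'.length = h then ((c'.blocks.map fun b => PowerSeries.coeff (R := ℚ) b f).prod)
               else 0) := by
        intro i _ c'
        simp only [hφ, List.length_cons, Nat.add_right_cancel_iff, List.map_cons, List.prod_cons,
          Composition.length]
        split <;> simp
      calc ∑ i ∈ Finset.Icc 1 n, ∑ c' : Composition (n - i), φ (i :: c'.blocks)
          = ∑ i ∈ Finset.Icc 1 n,
              PowerSeries.coeff (R := ℚ) i f * PowerSeries.coeff (R := ℚ) (n - i) (f ^ h) := by
            refine Finset.sum_congr rfl fun i hi => ?_
            rw [Finset.sum_congr rfl fun c' _ => h1 i hi c', ← Finset.mul_sum,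
              ← Finset.sum_filter, ih (n - i)]
        _ = ∑ i ∈ Finset.range (n + 1),
              PowerSeries.coeff (R := ℚ) i f * PowerSeries.coeff (R := ℚ) (n - i) (f ^ h) := by
            refine Finset.sum_subset ?_ ?_
            · intro x hx
              rw [Finset.mem_range]
              have := (Finset.mem_Icc.mp hx).2
              omega
            · intro x hx1 hx2
              have : x = 0 := by
                rw [Finset.mem_range] at hx1
                rw [Finset.mem_Icc] at hx2
                omega
              rw [this, PowerSeries.coeff_zero_eq_constantCoeff, hf, zero_mul]
        _ = PowerSeries.coeff (R := ℚ) n (f ^ (h + 1)) := by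
            rw [pow_succ', PowerSeries.coeff_mul,
              Finset.Nat.sum_antidiagonal_eq_sum_range_succ_mk]

lemma coeff_L (n b : ℕ) (hn : 0 < n) :
    PowerSeries.coeff (R := ℚ) n
      (∑ h ∈ Finset.range (n + 1),
        (PowerSeries.C (R := ℚ)) ((-1 : ℚ) ^ (h - 1) / h) *
          ((1 + PowerSeries.X) ^ (b + 1) - 1) ^ h)
    = (-1 : ℚ) ^ (n - 1) * (b + 1 : ℚ) / n := by
  set G : ℚ⟦X⟧ := (1 + PowerSeries.X) ^ (b + 1) - 1 with hGdef
  set L : ℚ⟦X⟧ := ∑ h ∈ Finset.range (n + 1),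
      (PowerSeries.C (R := ℚ)) ((-1 : ℚ) ^ (h - 1) / h) * G ^ h with hLdef
  have hG0 : PowerSeries.constantCoeff (R := ℚ) G = 0 := by
    simp [hGdef]
  have hd1X : d⁄dX ℚ (1 + PowerSeries.X) = 1 := by
    rw [map_add, PowerSeries.derivative_X, Derivation.map_one_eq_zero, zero_add]
  have hdG : d⁄dX ℚ G = (PowerSeries.C (R := ℚ)) ((b : ℚ) + 1) * (1 + PowerSeries.X) ^ b := by
    rw [hGdef, map_sub, Derivation.map_one_eq_zero, sub_zero, Derivation.leibniz_pow,
      hd1X, Nat.add_sub_cancel, smul_eq_mul, mul_one, nsmul_eq_mul]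
    rw [map_add, map_one, map_natCast]
    push_cast
    ring
  have hdL : d⁄dX ℚ L = (∑ j ∈ Finset.range n, (-G) ^ j) * d⁄dX ℚ G := by
    rw [hLdef, map_sum, Finset.sum_range_succ']
    have hzero : d⁄dX ℚ ((PowerSeries.C (R := ℚ)) ((-1 : ℚ) ^ (0 - 1) / (0 : ℕ)) * G ^ 0) = 0 := by
      simp
    rw [hzero, add_zero]
    rw [Finset.sum_mul]
    refine Finset.sum_congr rfl fun j _ => ?_
    have hcj : (PowerSeries.C (R := ℚ)) ((-1 : ℚ) ^ (j + 1 - 1) / (j + 1 : ℕ)) * ((j + 1 : ℕ) : ℚ⟦X⟧)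
        = (PowerSeries.C (R := ℚ)) ((-1 : ℚ) ^ j) := by
      rw [← map_natCast ((PowerSeries.C (R := ℚ))) (j + 1), ← map_mul]
      congr 1
      rw [Nat.add_sub_cancel]
      push_cast
      field_simp
    calc d⁄dX ℚ ((PowerSeries.C (R := ℚ)) ((-1 : ℚ) ^ (j + 1 - 1) / (j + 1 : ℕ)) * G ^ (j + 1))
        = (PowerSeries.C (R := ℚ)) ((-1 : ℚ) ^ (j + 1 - 1) / (j + 1 : ℕ)) *
            (((j + 1 : ℕ) : ℚ⟦X⟧) * (G ^ j * d⁄dX ℚ G)) := by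
          rw [Derivation.leibniz, Derivation.leibniz_pow, PowerSeries.derivative_C,
            Nat.add_sub_cancel]
          simp only [smul_eq_mul, nsmul_eq_mul, mul_zero]
          ring
      _ = (PowerSeries.C (R := ℚ)) ((-1 : ℚ) ^ j) * (G ^ j * d⁄dX ℚ G) := by
          rw [← mul_assoc, hcj]
      _ = (-G) ^ j * d⁄dX ℚ G := by
          rw [map_pow, map_neg, map_one]
          conv_rhs => rw [neg_pow]
          ring
  have hgeomG : (1 + G) * (∑ j ∈ Finset.range n, (-G) ^ j) = 1 - (-G) ^ n := by
    linear_combination (-1 : ℚ⟦X⟧) * geom_sum_mul (-G) n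
  have hgeomX : ((1 + PowerSeries.X : ℚ⟦X⟧)) * (∑ k ∈ Finset.range n, (-PowerSeries.X) ^ k)
      = 1 - (-PowerSeries.X : ℚ⟦X⟧) ^ n := by
    linear_combination (-1 : ℚ⟦X⟧) * geom_sum_mul (-(PowerSeries.X : ℚ⟦X⟧)) n
  have h1G : (1 + PowerSeries.X : ℚ⟦X⟧) ^ (b + 1) = 1 + G := by
    rw [hGdef]; ring
  set P₁ : ℚ⟦X⟧ := ∑ k ∈ Finset.range n, (-PowerSeries.X) ^ k with hP₁def
  set Q : ℚ⟦X⟧ := d⁄dX ℚ L - (PowerSeries.C (R := ℚ)) ((b : ℚ) + 1) * P₁ with hQdef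
  have claim : (1 + PowerSeries.X) ^ (b + 1) * Q
      = (PowerSeries.C (R := ℚ)) ((b : ℚ) + 1) * (1 + PowerSeries.X) ^ b *
          ((-PowerSeries.X) ^ n - (-G) ^ n) := by
    rw [hQdef, mul_sub, hdL, hdG, h1G]
    have expand : (1 + G) * ((∑ j ∈ Finset.range n, (-G) ^ j) *
        ((PowerSeries.C (R := ℚ)) ((b : ℚ) + 1) * (1 + PowerSeries.X) ^ b))
        = (1 - (-G) ^ n) * ((PowerSeries.C (R := ℚ)) ((b : ℚ) + 1) * (1 + PowerSeries.X) ^ b) := by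
      linear_combination ((PowerSeries.C (R := ℚ)) ((b : ℚ) + 1) * (1 + PowerSeries.X) ^ b) * hgeomG
    rw [expand]
    have h2 : (1 + G) * ((PowerSeries.C (R := ℚ)) ((b : ℚ) + 1) * P₁)
        = (PowerSeries.C (R := ℚ)) ((b : ℚ) + 1) * (1 + PowerSeries.X) ^ b *
            ((1 + PowerSeries.X) * P₁) := by
      rw [← h1G]; ring
    rw [h2, hgeomX]
    ring
  have hXG : (PowerSeries.X : ℚ⟦X⟧) ∣ G := PowerSeries.X_dvd_iff.mpr hG0
  have hdvd : (PowerSeries.X : ℚ⟦X⟧) ^ n ∣ (1 + PowerSeries.X) ^ (b + 1) * Q := by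
    rw [claim]
    apply Dvd.dvd.mul_left
    apply dvd_sub
    · rw [neg_pow]
      exact Dvd.dvd.mul_left dvd_rfl _
    · rw [neg_pow]
      exact Dvd.dvd.mul_left (pow_dvd_pow_of_dvd hXG n) _
  have hu : IsUnit ((1 + PowerSeries.X : ℚ⟦X⟧) ^ (b + 1)) := by
    apply IsUnit.pow
    rw [PowerSeries.isUnit_iff_constantCoeff]
    simp
  have hdvdQ : (PowerSeries.X : ℚ⟦X⟧) ^ n ∣ Q := (IsUnit.dvd_mul_left hu).mp hdvd
  have hcoeffQ : PowerSeries.coeff (R := ℚ) (n - 1) Q = 0 := by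
    rw [PowerSeries.X_pow_dvd_iff] at hdvdQ
    exact hdvdQ (n - 1) (by omega)
  have hcoeffP₁ : PowerSeries.coeff (R := ℚ) (n - 1) P₁ = (-1 : ℚ) ^ (n - 1) := by
    rw [hP₁def, map_sum]
    have hterm : ∀ k ∈ Finset.range n, PowerSeries.coeff (R := ℚ) (n - 1) ((-PowerSeries.X : ℚ⟦X⟧) ^ k)
        = if n - 1 = k then (-1 : ℚ) ^ k else 0 := by
      intro k _
      rw [neg_pow, ← map_one ((PowerSeries.C (R := ℚ))), ← map_neg, ← map_pow,
        PowerSeries.coeff_C_mul, PowerSeries.coeff_X_pow]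
      split <;> simp
    rw [Finset.sum_congr rfl hterm]
    simp only [eq_comm (a := n - 1)]
    rw [Finset.sum_ite_eq' (Finset.range n) (n - 1) fun k => (-1 : ℚ) ^ k]
    rw [if_pos (Finset.mem_range.mpr (by omega))]
  obtain ⟨m, rfl⟩ : ∃ m, n = m + 1 := ⟨n - 1, by omega⟩
  have hcoeffdL : PowerSeries.coeff (R := ℚ) m (d⁄dX ℚ L)
      = PowerSeries.coeff (R := ℚ) (m + 1) L * (m + 1) := PowerSeries.coeff_derivative L m
  rw [hQdef, map_sub, PowerSeries.coeff_C_mul, hcoeffP₁] at hcoeffQ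
  simp only [Nat.add_sub_cancel] at hcoeffQ ⊢
  rw [hcoeffdL] at hcoeffQ
  have : PowerSeries.coeff (R := ℚ) (m + 1) L = (-1 : ℚ) ^ m * ((b : ℚ) + 1) / (m + 1 : ℚ) := by
    have hm1 : ((m : ℚ) + 1) ≠ 0 := by positivity
    rw [sub_eq_zero] at hcoeffQ
    rw [eq_div_iff (by positivity)]
    linarith [hcoeffQ]
  rw [this]
  push_cast
  ring

/-- for every `n ≥ 1` and every natural number `a`,
`Σ ((−1)^{h−1}/h) · C(a,c_1)⋯C(a,c_h) = (−1)^{n−1}·a/n`, the sum being over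
all compositions `(c_1,…,c_h)` of `n`. -/
theorem composition_binomial_identity (n : ℕ) (hn : 1 ≤ n) (a : ℕ) :
    ∑ c : Composition n,
      ((-1 : ℚ)) ^ (c.length - 1) / (c.length : ℚ) *
        (c.blocks.map (fun b => (Nat.choose a b : ℚ))).prod =
    (-1 : ℚ) ^ (n - 1) * (a : ℚ) / (n : ℚ) := by
  rcases Nat.eq_zero_or_pos a with rfl | ha
  · rw [Nat.cast_zero, mul_zero, zero_div]
    apply Finset.sum_eq_zero
    intro c _
    have hne : c.blocks ≠ [] := by
      intro h
      have hs := c.blocks_sum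
      rw [h] at hs
      simp at hs
      omega
    rcases hb : c.blocks with _ | ⟨x, xs⟩
    · exact absurd hb hne
    · have hx : 0 < x := c.blocks_pos (by rw [hb]; exact List.mem_cons_self)
      simp [Nat.choose_eq_zero_of_lt hx]
  · obtain ⟨b, rfl⟩ : ∃ b, a = b + 1 := ⟨a - 1, by omega⟩
    set G : ℚ⟦X⟧ := (1 + PowerSeries.X) ^ (b + 1) - 1 with hGdef
    have hG0 : PowerSeries.constantCoeff (R := ℚ) G = 0 := by simp [hGdef]
    have hcoeffG : ∀ k, 1 ≤ k → PowerSeries.coeff (R := ℚ) k G = ((b + 1).choose k : ℚ) := by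
      intro k hk
      rw [hGdef, map_sub, coeff_one_add_X_pow, PowerSeries.coeff_one, if_neg (by omega),
        sub_zero]
    have hA : ∀ c : Composition n,
        (c.blocks.map (fun x => ((b + 1).choose x : ℚ))).prod
          = (c.blocks.map (fun x => PowerSeries.coeff (R := ℚ) x G)).prod := by
      intro c
      congr 1
      apply List.map_congr_left
      intro x hx
      exact (hcoeffG x (c.one_le_blocks hx)).symm
    calc ∑ c : Composition n,
          ((-1 : ℚ)) ^ (c.length - 1) / (c.length : ℚ) *
            (c.blocks.map (fun x => ((b + 1).choose x : ℚ))).prod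
        = ∑ c : Composition n,
            ((-1 : ℚ)) ^ (c.length - 1) / (c.length : ℚ) *
              (c.blocks.map (fun x => PowerSeries.coeff (R := ℚ) x G)).prod :=
          Finset.sum_congr rfl fun c _ => by rw [hA c]
      _ = ∑ h ∈ Finset.range (n + 1),
            ∑ c ∈ Finset.univ.filter (fun c : Composition n => c.length = h),
              ((-1 : ℚ)) ^ (c.length - 1) / (c.length : ℚ) *
                (c.blocks.map (fun x => PowerSeries.coeff (R := ℚ) x G)).prod :=
          (Finset.sum_fiberwise_of_maps_to
            (fun c _ => Finset.mem_range.mpr (Nat.lt_succ_of_le c.length_le)) _).symm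
      _ = ∑ h ∈ Finset.range (n + 1),
            ((-1 : ℚ)) ^ (h - 1) / (h : ℚ) * PowerSeries.coeff (R := ℚ) n (G ^ h) := by
          refine Finset.sum_congr rfl fun h _ => ?_
          rw [← sum_composition_length G hG0 h n, Finset.mul_sum]
          refine Finset.sum_congr rfl fun c hc => ?_
          rw [(Finset.mem_filter.mp hc).2]
      _ = PowerSeries.coeff (R := ℚ) n
            (∑ h ∈ Finset.range (n + 1),
              (PowerSeries.C (R := ℚ)) ((-1 : ℚ) ^ (h - 1) / h) * G ^ h) := by
          rw [map_sum]
          exact Finset.sum_congr rfl fun h _ => (PowerSeries.coeff_C_mul _ _ _).symm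
      _ = (-1 : ℚ) ^ (n - 1) * ((b : ℚ) + 1) / n := coeff_L n b hn
      _ = (-1 : ℚ) ^ (n - 1) * ((b + 1 : ℕ) : ℚ) / (n : ℚ) := by push_cast; ring
end
end

section
/- Let n ≥ 1, let σ, τ ∈ S_n, and let d : {1,…,n} → ℕ. Then the following are equivalent: (i) for all i, j ∈ {1,…,n}, τ(i) < τ(j) if and only if σ(i) + n·d(i) < σ(j) + n·d(j); (ii) for every k with 1 ≤ k ≤ n−1, d(τ⁻¹(k)) ≤ d(τ⁻¹(k+1)), and moreover d(τ⁻¹(k)) < d(τ⁻¹(k+1)) whenever k ∈ Des(σ∘τ⁻¹). (Condition (i) says that τ is the standardization of the sequence (σ(1) + n·d(1), …, σ(n) + n·d(n)), where the standardization of a sequence of distinct numbers is the unique permutation with the same pairwise order relations.) -/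
lemma key_arith (n a b x y : ℕ) (ha : a < n + 1) (hb : b < n + 1) :
    a + (n + 1) * x < b + (n + 1) * y ↔ x < y ∨ (x = y ∧ a < b) := by
  constructor
  · intro h
    rcases lt_trichotomy x y with h1 | h1 | h1
    · exact Or.inl h1
    · subst h1; exact Or.inr ⟨rfl, by linarith⟩
    · exfalso
      have h2 : (n + 1) * y + (n + 1) ≤ (n + 1) * x := by
        have : y + 1 ≤ x := h1
        calc (n + 1) * y + (n + 1) = (n + 1) * (y + 1) := by ring
          _ ≤ (n + 1) * x := Nat.mul_le_mul_left _ this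
      linarith
  · rintro (h | ⟨rfl, h⟩)
    · have h2 : (n + 1) * x + (n + 1) ≤ (n + 1) * y := by
        have : x + 1 ≤ y := h
        calc (n + 1) * x + (n + 1) = (n + 1) * (x + 1) := by ring
          _ ≤ (n + 1) * y := Nat.mul_le_mul_left _ this
      linarith
    · linarith

/-- `τ` is the standardization of the sequence
`(σ(1) + N·d(1), …, σ(N) + N·d(N))` (where `N = n+1`) if and only if
`d∘τ⁻¹` is weakly increasing along consecutive positions and strictly
increasing at each descent of `σ∘τ⁻¹`. -/
theorem standardization_iff_descent_condition (n : ℕ)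
    (σ τ : Equiv.Perm (Fin (n + 1))) (d : Fin (n + 1) → ℕ) :
    (∀ i j : Fin (n + 1), τ i < τ j ↔
      (σ i : ℕ) + (n + 1) * d i < (σ j : ℕ) + (n + 1) * d j) ↔
    (∀ k : Fin n,
      d (τ⁻¹ k.castSucc) ≤ d (τ⁻¹ k.succ) ∧
      (k ∈ Des (σ * τ⁻¹) → d (τ⁻¹ k.castSucc) < d (τ⁻¹ k.succ))) := by
  constructor
  · intro H k
    have h1 : τ (τ⁻¹ k.castSucc) < τ (τ⁻¹ k.succ) := by
      simp [Fin.castSucc_lt_succ]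
    have h2 := (H _ _).mp h1
    rw [key_arith n _ _ _ _ (σ _).isLt (σ _).isLt] at h2
    constructor
    · rcases h2 with h | ⟨h, _⟩ <;> omega
    · intro hk
      simp only [Des, Finset.mem_filter, Finset.mem_univ, true_and,
        Equiv.Perm.mul_apply, Finset.mem_filter_univ] at hk
      rcases h2 with h | ⟨h, hab⟩
      · exact h
      · exact absurd hab (not_lt.mpr (le_of_lt (Finset.mem_filter.mp hk).2))
  · intro H
    have mono : StrictMono (fun k : Fin (n + 1) =>
        (σ (τ⁻¹ k) : ℕ) + (n + 1) * d (τ⁻¹ k)) := by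
      rw [Fin.strictMono_iff_lt_succ]
      intro k
      obtain ⟨hle, hdes⟩ := H k
      rw [key_arith n _ _ _ _ (σ _).isLt (σ _).isLt]
      by_cases hd : d (τ⁻¹ k.castSucc) = d (τ⁻¹ k.succ)
      · refine Or.inr ⟨hd, ?_⟩
        have hnodes : k ∉ Des (σ * τ⁻¹) := fun h => absurd (hdes h) (by omega)
        simp only [Des, Finset.mem_filter, Finset.mem_univ, true_and,
          Equiv.Perm.mul_apply, not_lt, Finset.mem_filter_univ] at hnodes
        have hne : σ (τ⁻¹ k.castSucc) ≠ σ (τ⁻¹ k.succ) := by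
          intro h
          have h2 := (Equiv.injective _) (σ.injective h)
          exact absurd h2 (Fin.castSucc_lt_succ (i := k)).ne
        exact lt_of_le_of_ne (not_lt.mp (fun h => hnodes (Finset.mem_filter.mpr ⟨Finset.mem_univ _, h⟩))) (fun h => hne (Fin.val_injective h.symm).symm)
      · exact Or.inl (lt_of_le_of_ne hle hd)
    intro i j
    have := (mono.lt_iff_lt (a := τ i) (b := τ j)).symm
    simpa [Equiv.Perm.inv_def, Equiv.symm_apply_apply] using this
end

section
/- Let n ≥ 1 and let r = (r_0, r_1, r_2, …) be a sequence of nonnegative real numbers with Σ_j r_j = 1. Then for all σ, τ ∈ S_n, the family of products Π_{i=1}^n r_{d(i)}, indexed by those functions d : {1,…,n} → ℕ satisfying (for all i, j) τ(i) < τ(j) ⟺ σ(i) + n·d(i) < σ(j) + n·d(j), is summable, and its sum equals F_{Des(σ∘τ⁻¹)}(r). In probabilistic terms: if δ_1,…,δ_n are i.i.d. with P(δ_i = j) = r_j for j ∈ ℕ, then the probability that the standardization of (σ(1) + n·δ_1, …, σ(n) + n·δ_n) equals τ is F_{Des(σ∘τ⁻¹)}(r), which is the QS-distribution probability of σ∘τ⁻¹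 inverse. -/
/-- The fundamental quasisymmetric function `F_S` evaluated at
`r = (r_0, r_1, …)`: the sum of `r_{i_1}⋯r_{i_{n+1}}` over all weakly
increasing sequences `i : Fin (n+1) → ℕ` which increase strictly at each
position in `S`. -/
noncomputable def Fqs {n : ℕ} (r : ℕ → ℝ) (S : Finset (Fin n)) : ℝ :=
  ∑' p : {i : Fin (n + 1) → ℕ //
      (∀ k : Fin n, i k.castSucc ≤ i k.succ) ∧ ∀ k ∈ S, i k.castSucc < i k.succ},
    ∏ j, r (p.1 j)

private lemma arith1 {N a b x y : ℕ} (hb : b < N) (h : a + N * x < b + N * y) : x ≤ y := by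
  by_contra hxy
  push_neg at hxy
  have h2 : N * y + N ≤ N * x := by
    calc N * y + N = N * (y + 1) := by ring
    _ ≤ N * x := Nat.mul_le_mul_left N hxy
  linarith

private lemma arith2 {N a b x y : ℕ} (hba : b < a) (h : a + N * x < b + N * y) : x < y := by
  by_contra hxy
  push_neg at hxy
  have h2 : N * y ≤ N * x := Nat.mul_le_mul_left N hxy
  linarith

private lemma arith3 {N a b x y : ℕ} (ha : a < N) (hxy : x < y) : a + N * x < b + N * y := by
  have h2 : N * x + N ≤ N * y := by
    calc N * x + N = N * (x + 1) := by ring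
    _ ≤ N * y := Nat.mul_le_mul_left N hxy
  linarith

private lemma arith4 {N a b x y : ℕ} (hab : a < b) (hxy : x ≤ y) : a + N * x < b + N * y := by
  have h2 : N * x ≤ N * y := Nat.mul_le_mul_left N hxy
  linarith

private lemma fwd {n : ℕ} (σ τ : Equiv.Perm (Fin (n + 1))) (d : Fin (n + 1) → ℕ)
    (h : ∀ i j : Fin (n + 1), τ i < τ j ↔
      (σ i : ℕ) + (n + 1) * d i < (σ j : ℕ) + (n + 1) * d j) :
    (∀ k : Fin n, d (τ⁻¹ k.castSucc) ≤ d (τ⁻¹ k.succ)) ∧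
      ∀ k ∈ Des (σ * τ⁻¹), d (τ⁻¹ k.castSucc) < d (τ⁻¹ k.succ) := by
  have key : ∀ k : Fin n,
      ((σ * τ⁻¹) k.castSucc : ℕ) + (n + 1) * d (τ⁻¹ k.castSucc)
        < ((σ * τ⁻¹) k.succ : ℕ) + (n + 1) * d (τ⁻¹ k.succ) := by
    intro k
    have h2 := (h (τ⁻¹ k.castSucc) (τ⁻¹ k.succ)).mp
    simp only [Equiv.Perm.inv_def, Equiv.apply_symm_apply] at h2
    exact h2 (Fin.castSucc_lt_succ (i := k))
  refine ⟨fun k => arith1 (Fin.is_lt _) (key k), fun k hk => ?_⟩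
  have hdes : (σ * τ⁻¹) k.succ < (σ * τ⁻¹) k.castSucc := by
    exact (Finset.mem_filter.mp hk).2
  exact arith2 hdes (key k)

private lemma bwd {n : ℕ} (σ τ : Equiv.Perm (Fin (n + 1))) (e : Fin (n + 1) → ℕ)
    (h1 : ∀ k : Fin n, e k.castSucc ≤ e k.succ)
    (h2 : ∀ k ∈ Des (σ * τ⁻¹), e k.castSucc < e k.succ) :
    ∀ i j : Fin (n + 1), τ i < τ j ↔
      (σ i : ℕ) + (n + 1) * e (τ i) < (σ j : ℕ) + (n + 1) * e (τ j) := by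
  have hmono : StrictMono (fun k : Fin (n + 1) => ((σ * τ⁻¹) k : ℕ) + (n + 1) * e k) := by
    rw [Fin.strictMono_iff_lt_succ]
    intro k
    by_cases hk : k ∈ Des (σ * τ⁻¹)
    · have hdes : (σ * τ⁻¹) k.succ < (σ * τ⁻¹) k.castSucc := (Finset.mem_filter.mp hk).2
      exact arith3 (Fin.is_lt _) (h2 k hk)
    · have hnd : ¬ (σ * τ⁻¹) k.succ < (σ * τ⁻¹) k.castSucc := fun h => hk (Finset.mem_filter.mpr ⟨Finset.mem_univ _, h⟩)
      have hne : (σ * τ⁻¹) k.castSucc ≠ (σ * τ⁻¹) k.succ := by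
        intro hEq
        exact (Fin.castSucc_lt_succ (i := k)).ne ((σ * τ⁻¹).injective hEq)
      have hlt : (σ * τ⁻¹) k.castSucc < (σ * τ⁻¹) k.succ := lt_of_le_of_ne (not_lt.mp hnd) hne
      exact arith4 hlt (h1 k)
  intro i j
  have h3 := hmono.lt_iff_lt (a := τ i) (b := τ j)
  simp only [Equiv.Perm.mul_apply, Equiv.Perm.inv_def, Equiv.symm_apply_apply] at h3
  exact h3.symm

/-- The reindexing bijection between the two index subtypes. -/
private def theEquiv {n : ℕ} (σ τ : Equiv.Perm (Fin (n + 1))) :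
    {d : Fin (n + 1) → ℕ //
        ∀ i j : Fin (n + 1), τ i < τ j ↔
          (σ i : ℕ) + (n + 1) * d i < (σ j : ℕ) + (n + 1) * d j} ≃
    {i : Fin (n + 1) → ℕ //
        (∀ k : Fin n, i k.castSucc ≤ i k.succ) ∧
          ∀ k ∈ Des (σ * τ⁻¹), i k.castSucc < i k.succ} where
  toFun d := ⟨fun k => d.1 (τ⁻¹ k), fwd σ τ d.1 d.2⟩
  invFun p := ⟨fun j => p.1 (τ j), bwd σ τ p.1 p.2.1 p.2.2⟩
  left_inv d := by
    ext j
    simp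
  right_inv p := by
    ext k
    simp

private lemma hasSum_pi (r : ℕ → ℝ) (hr0 : ∀ j, 0 ≤ r j) (hr1 : HasSum r 1) (m : ℕ) :
    HasSum (fun g : Fin m → ℕ => ∏ j, r (g j)) 1 := by
  induction m with
  | zero =>
    have h : (fun g : Fin 0 → ℕ => ∏ j, r (g j)) = fun _ => (1 : ℝ) := by
      funext g; simp
    rw [h]
    simpa using hasSum_fintype (fun _ : Fin 0 → ℕ => (1 : ℝ))
  | succ m ih =>
    have hs : Summable (fun x : ℕ × (Fin m → ℕ) => r x.1 * ∏ j, r (x.2 j)) := by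
      apply Summable.mul_of_nonneg hr1.summable ih.summable
      · exact fun j => hr0 j
      · exact fun g => Finset.prod_nonneg fun j _ => hr0 _
    have h := hr1.mul ih hs
    rw [mul_one] at h
    have hcomp : (fun g : Fin (m + 1) → ℕ => ∏ j, r (g j)) =
        (fun x : ℕ × (Fin m → ℕ) => r x.1 * ∏ j, r (x.2 j)) ∘ (Fin.consEquiv fun _ : Fin (m + 1) => ℕ).symm := by
      funext g
      simp only [Function.comp_apply, Fin.consEquiv_symm_apply, Fin.prod_univ_succ]
      rfl
    rw [hcomp]
    exact (Fin.consEquiv fun _ : Fin (m + 1) => ℕ).symm.hasSum_iff.mpr h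

/-- the family defining `F_{Des(σ∘τ⁻¹)}(r)` is summable, and the
family of products `Π_i r_{d(i)}`, over all `d` such that `τ` is the
standardization of `(σ(1) + N·d(1), …, σ(N) + N·d(N))` (`N = n+1`),
is summable with sum `F_{Des(σ∘τ⁻¹)}(r)`. -/
theorem qs_distribution_transition (n : ℕ) (r : ℕ → ℝ)
    (hr0 : ∀ j, 0 ≤ r j) (hr1 : HasSum r 1)
    (σ τ : Equiv.Perm (Fin (n + 1))) :
    Summable (fun p : {i : Fin (n + 1) → ℕ //
        (∀ k : Fin n, i k.castSucc ≤ i k.succ) ∧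
          ∀ k ∈ Des (σ * τ⁻¹), i k.castSucc < i k.succ} =>
      ∏ j, r (p.1 j)) ∧
    HasSum (fun d : {d : Fin (n + 1) → ℕ //
        ∀ i j : Fin (n + 1), τ i < τ j ↔
          (σ i : ℕ) + (n + 1) * d i < (σ j : ℕ) + (n + 1) * d j} =>
      ∏ i, r (d.1 i)) (Fqs r (Des (σ * τ⁻¹))) := by
  have hpi := hasSum_pi r hr0 hr1 (n + 1)
  have hsum : Summable (fun p : {i : Fin (n + 1) → ℕ //
      (∀ k : Fin n, i k.castSucc ≤ i k.succ) ∧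
        ∀ k ∈ Des (σ * τ⁻¹), i k.castSucc < i k.succ} =>
      ∏ j, r (p.1 j)) :=
    hpi.summable.comp_injective Subtype.coe_injective
  refine ⟨hsum, ?_⟩
  have hA : HasSum (fun p : {i : Fin (n + 1) → ℕ //
      (∀ k : Fin n, i k.castSucc ≤ i k.succ) ∧
        ∀ k ∈ Des (σ * τ⁻¹), i k.castSucc < i k.succ} =>
      ∏ j, r (p.1 j)) (Fqs r (Des (σ * τ⁻¹))) := hsum.hasSum
  have h2 := (theEquiv σ τ).hasSum_iff.mpr hA
  have hcomp : ((fun p : {i : Fin (n + 1) → ℕ //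
      (∀ k : Fin n, i k.castSucc ≤ i k.succ) ∧
        ∀ k ∈ Des (σ * τ⁻¹), i k.castSucc < i k.succ} =>
      ∏ j, r (p.1 j)) ∘ (theEquiv σ τ)) =
      fun d : {d : Fin (n + 1) → ℕ //
        ∀ i j : Fin (n + 1), τ i < τ j ↔
          (σ i : ℕ) + (n + 1) * d i < (σ j : ℕ) + (n + 1) * d j} =>
      ∏ i, r (d.1 i) := by
    funext d
    show ∏ j, r (d.1 (τ⁻¹ j)) = ∏ i, r (d.1 i)
    exact Equiv.prod_comp τ⁻¹ (fun x => r (d.1 x))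
  rwa [hcomp] at h2
end

section
/- Let n ≥ 1 and let a be a positive integer. Then for all σ, τ ∈ S_n, the number of functions d : {1,…,n} → {0,1,…,a−1} such that for all i, j ∈ {1,…,n}, τ(i) < τ(j) ⟺ σ(i) + n·d(i) < σ(j) + n·d(j), equals the binomial coefficient C(n + a − 1 − des(σ∘τ⁻¹), n). In probabilistic terms: the transition probability of the a-shuffle walk from σ to τ is C(n + a − 1 − des(σ∘τ⁻¹), n)/a^n, in accordance with the Bayer–Diaconis formula. -/
open Finset

/-- number of elements of `D` with value `< m`. -/
def cnt {n : ℕ} (D : Finset (Fin n)) (m : ℕ) : ℕ := (D.filter fun i : Fin n => (i : ℕ) < m).card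

lemma cnt_le_card {n : ℕ} (D : Finset (Fin n)) (m : ℕ) : cnt D m ≤ D.card :=
  Finset.card_filter_le _ _

lemma cnt_le {n : ℕ} (D : Finset (Fin n)) (m : ℕ) : cnt D m ≤ m := by
  classical
  have h := Finset.card_le_card_of_injOn (s := D.filter fun i : Fin n => (i : ℕ) < m)
    (t := Finset.range m) (fun i : Fin n => (i : ℕ))
    (by intro i hi; simp at hi ⊢; exact hi.2)
    (by intro i _ j _ hij; exact Fin.ext hij)
  simpa [cnt, Finset.card_range] using h

lemma cnt_step {n : ℕ} (D : Finset (Fin n)) (k : Fin n) :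
    cnt D ((k : ℕ) + 1) = cnt D (k : ℕ) + (if k ∈ D then 1 else 0) := by
  classical
  have hsplit : (D.filter fun i : Fin n => (i : ℕ) < (k : ℕ) + 1)
      = (D.filter fun i : Fin n => (i : ℕ) < (k : ℕ)) ∪ (D.filter fun i : Fin n => i = k) := by
    ext i
    simp only [Finset.mem_filter, Finset.mem_union]
    constructor
    · rintro ⟨hi, hlt⟩
      rcases Nat.lt_succ_iff_lt_or_eq.mp hlt with h | h
      · exact Or.inl ⟨hi, h⟩
      · exact Or.inr ⟨hi, Fin.ext h⟩
    · rintro (⟨hi, h⟩ | ⟨hi, h⟩)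
      · exact ⟨hi, by omega⟩
      · refine ⟨hi, ?_⟩; subst h; omega
  have hdisj : Disjoint (D.filter fun i : Fin n => (i : ℕ) < (k : ℕ))
      (D.filter fun i : Fin n => i = k) := by
    rw [Finset.disjoint_left]
    intro i hi hj
    simp only [Finset.mem_filter] at hi hj
    have := hj.2; subst this; omega
  have hcard2 : (D.filter fun i : Fin n => i = k).card = if k ∈ D then 1 else 0 := by
    rw [Finset.filter_eq']
    split <;> simp
  rw [cnt, cnt, hsplit, Finset.card_union_of_disjoint hdisj, hcard2]

lemma cnt_ge {n : ℕ} (D : Finset (Fin n)) (m : ℕ) (hm : m ≤ n) :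
    D.card ≤ cnt D m + (n - m) := by
  classical
  have h1 := Finset.card_filter_add_card_filter_not (s := D)
    (p := fun i : Fin n => (i : ℕ) < m)
  have h2 : (D.filter fun i : Fin n => ¬ (i : ℕ) < m).card ≤ n - m := by
    have h := Finset.card_le_card_of_injOn (s := D.filter fun i : Fin n => ¬ (i : ℕ) < m)
      (t := Finset.range (n - m)) (fun i : Fin n => (i : ℕ) - m)
      (by intro i hi; simp at hi ⊢; have := i.is_lt; omega)
      (by intro i hi j hj hij
          simp only [Finset.coe_filter, Set.mem_setOf_eq] at hi hj
          simp only at hij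
          exact Fin.ext (by omega))
    simpa [Finset.card_range] using h
  have h3 := cnt_le_card D m
  unfold cnt at *
  omega

lemma fin_chain_le {N M : ℕ} {g : Fin (N + 1) → Fin M}
    (h : ∀ k : Fin N, g k.castSucc < g k.succ) :
    ∀ (t : ℕ) (i j : Fin (N + 1)), (i : ℕ) + t = (j : ℕ) → (g i : ℕ) + t ≤ (g j : ℕ) := by
  intro t
  induction t with
  | zero =>
    intro i j hij
    have : i = j := Fin.ext (by omega)
    simp [this]
  | succ t ih =>
    intro i j hij
    have hj := j.is_lt
    have hlt : (i : ℕ) + t < N + 1 := by omega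
    have h1 := ih i ⟨(i : ℕ) + t, hlt⟩ rfl
    have ht : (i : ℕ) + t < N := by omega
    have h2 := h ⟨(i : ℕ) + t, ht⟩
    rw [Fin.lt_def] at h2
    have e1 : (⟨(i : ℕ) + t, ht⟩ : Fin N).castSucc = ⟨(i : ℕ) + t, hlt⟩ := rfl
    have e2 : (⟨(i : ℕ) + t, ht⟩ : Fin N).succ = j := Fin.ext (by simp [Fin.val_succ]; omega)
    rw [e1, e2] at h2
    omega

def Qpred {n a : ℕ} (D : Finset (Fin n)) (e : Fin (n + 1) → Fin a) : Prop :=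
  ∀ k : Fin n, (e k.castSucc : ℕ) + (if k ∈ D then 1 else 0) ≤ (e k.succ : ℕ)

instance {n a : ℕ} (D : Finset (Fin n)) : DecidablePred (Qpred (a := a) D) := fun e =>
  decidable_of_iff
    (∀ k : Fin n, (e k.castSucc : ℕ) + (if k ∈ D then 1 else 0) ≤ (e k.succ : ℕ)) Iff.rfl

def Rpred {N M : ℕ} (g : Fin (N + 1) → Fin M) : Prop :=
  ∀ k : Fin N, g k.castSucc < g k.succ

instance {N M : ℕ} : DecidablePred (Rpred (N := N) (M := M)) := fun g =>
  decidable_of_iff (∀ k : Fin N, g k.castSucc < g k.succ) Iff.rfl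

/-- Bayer–Diaconis: the number of functions
`d : {1,…,N} → {0,…,a−1}` (`N = n+1`) such that `τ` is the standardization of
`(σ(1) + N·d(1), …, σ(N) + N·d(N))` equals `C(N + a − 1 − des(σ∘τ⁻¹), N)`;
equivalently, the `a`-shuffle transition probability from `σ` to `τ` is
`C(N + a − 1 − des(σ∘τ⁻¹), N)/a^N`. -/
theorem ashuffle_transition_count (n : ℕ) (a : ℕ) (ha : 1 ≤ a)
    (σ τ : Equiv.Perm (Fin (n + 1))) :
    ((Finset.univ : Finset (Fin (n + 1) → Fin a)).filter
      (fun d => ∀ i j : Fin (n + 1), τ i < τ j ↔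
        (σ i : ℕ) + (n + 1) * (d i : ℕ) < (σ j : ℕ) + (n + 1) * (d j : ℕ))).card =
    Nat.choose (n + a - (Des (σ * τ⁻¹)).card) (n + 1) := by
  classical
  set π := σ * τ⁻¹ with hπ
  set D := Des π with hD
  set s := D.card with hs
  have hdes_le : s ≤ n := le_trans (Finset.card_le_univ D) (by simp)
  set M := n + a - s with hM
  have hMs : M + s = n + a := by omega
  -- membership in D
  have hDk : ∀ k : Fin n, (k ∈ D ↔ (π k.succ : ℕ) < (π k.castSucc : ℕ)) := by
    intro k
    rw [hD]
    simp only [Des, Finset.mem_filter, Finset.mem_univ, true_and, Fin.lt_def]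
  -- arithmetic equivalence at each adjacent pair
  have arith : ∀ (k : Fin n) (x y : ℕ), x < a → y < a →
      (((π k.castSucc : ℕ) + (n + 1) * x < (π k.succ : ℕ) + (n + 1) * y) ↔
        (x + (if k ∈ D then 1 else 0) ≤ y)) := by
    intro k x y hx hy
    have hA : (π k.castSucc : ℕ) < n + 1 := (π k.castSucc).is_lt
    have hB : (π k.succ : ℕ) < n + 1 := (π k.succ).is_lt
    have hAB : (π k.castSucc : ℕ) ≠ (π k.succ : ℕ) := by
      intro hco
      exact absurd (π.injective (Fin.ext hco)) (Fin.castSucc_lt_succ (i := k)).ne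
    by_cases hk : k ∈ D
    · have hlt := (hDk k).mp hk
      rw [if_pos hk]
      constructor <;> intro h <;> nlinarith
    · have hnlt : ¬ (π k.succ : ℕ) < (π k.castSucc : ℕ) := fun h => hk ((hDk k).mpr h)
      have hlt : (π k.castSucc : ℕ) < (π k.succ : ℕ) := by omega
      rw [if_neg hk]
      constructor <;> intro h <;> nlinarith
  -- key equivalence
  have hPQ : ∀ d : Fin (n + 1) → Fin a,
      (∀ i j : Fin (n + 1), τ i < τ j ↔
        (σ i : ℕ) + (n + 1) * (d i : ℕ) < (σ j : ℕ) + (n + 1) * (d j : ℕ)) ↔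
      Qpred D (fun k => d (τ⁻¹ k)) := by
    intro d
    have hπval : ∀ k, (π k : ℕ) = (σ (τ⁻¹ k) : ℕ) := by
      intro k; rw [hπ]; rfl
    constructor
    · intro h k
      have h2 := h (τ⁻¹ k.castSucc) (τ⁻¹ k.succ)
      rw [show ∀ x, τ (τ⁻¹ x) = x from fun x => τ.apply_symm_apply x,
        show ∀ x, τ (τ⁻¹ x) = x from fun x => τ.apply_symm_apply x] at h2
      have h3 := h2.mp (Fin.castSucc_lt_succ (i := k))
      rw [← hπval, ← hπval] at h3
      exact (arith k _ _ (d _).is_lt (d _).is_lt).mp h3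
    · intro h i j
      have hsm : StrictMono (fun k : Fin (n + 1) => (π k : ℕ) + (n + 1) * (d (τ⁻¹ k) : ℕ)) := by
        rw [Fin.strictMono_iff_lt_succ]
        intro k
        exact (arith k _ _ (d _).is_lt (d _).is_lt).mpr (h k)
      have h4 := (hsm.lt_iff_lt (a := τ i) (b := τ j)).symm
      simp only [hπval, Equiv.Perm.coe_inv, Equiv.symm_apply_apply] at h4
      exact h4
  -- Step 1 : the original count equals the count of Q
  have card1 : ((Finset.univ : Finset (Fin (n + 1) → Fin a)).filter
      (fun d => ∀ i j : Fin (n + 1), τ i < τ j ↔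
        (σ i : ℕ) + (n + 1) * (d i : ℕ) < (σ j : ℕ) + (n + 1) * (d j : ℕ))).card
      = ((Finset.univ : Finset (Fin (n + 1) → Fin a)).filter (Qpred D)).card := by
    refine Finset.card_nbij' (fun d => fun k => d (τ⁻¹ k)) (fun e => fun i => e (τ i))
      ?_ ?_ ?_ ?_
    · intro d hd
      simp only [Finset.mem_coe, Finset.mem_filter, Finset.mem_univ, true_and] at hd ⊢
      exact (hPQ d).mp hd
    · intro e he
      simp only [Finset.mem_coe, Finset.mem_filter, Finset.mem_univ, true_and] at he ⊢
      refine (hPQ (fun i => e (τ i))).mpr ?_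
      intro k
      have := he k
      simpa only [Equiv.Perm.coe_inv, Equiv.apply_symm_apply] using this
    · intro d _; funext i; simp
    · intro e _; funext k; simp
  -- Step 2 : count of Q equals count of strictly monotone maps into Fin M
  have hMpos : 0 < M := by clear card1; omega
  have card2 : ((Finset.univ : Finset (Fin (n + 1) → Fin a)).filter (Qpred D)).card
      = ((Finset.univ : Finset (Fin (n + 1) → Fin M)).filter (Rpred (N := n) (M := M))).card := by
    clear card1
    refine Finset.card_nbij'
      (fun e => fun i : Fin (n + 1) => (⟨(e i : ℕ) + ((i : ℕ) - cnt D (i : ℕ)), by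
        have h1 := cnt_le D (i : ℕ)
        have h2 := cnt_ge D (i : ℕ) (by omega)
        have h3 := (e i).is_lt
        have h4 := i.is_lt
        omega⟩ : Fin M))
      (fun g => fun i : Fin (n + 1) => (⟨min ((g i : ℕ) - ((i : ℕ) - cnt D (i : ℕ))) (a - 1), by
        omega⟩ : Fin a))
      ?_ ?_ ?_ ?_
    · -- Q e → R (Φ e)
      intro e he
      simp only [Finset.mem_coe, Finset.mem_filter, Finset.mem_univ, true_and] at he ⊢
      intro k
      have hq := he k
      have hstep := cnt_step D k
      have h1 := cnt_le D (k : ℕ)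
      rw [Fin.lt_def]
      simp only [Fin.coe_castSucc, Fin.val_succ]
      by_cases hk : k ∈ D <;> simp only [hk, if_true, if_false] at hq hstep <;> omega
    · -- R g → Q (Ψ g)
      intro g hg
      simp only [Finset.mem_coe, Finset.mem_filter, Finset.mem_univ, true_and] at hg ⊢
      intro k
      have hlow1 : ((k.castSucc : Fin (n+1)) : ℕ) ≤ (g k.castSucc : ℕ) := by
        have := fin_chain_le hg ((k.castSucc : Fin (n+1)) : ℕ) 0 k.castSucc (by simp)
        omega
      have hhigh : (g k.castSucc : ℕ) + (n - ((k.castSucc : Fin (n+1)) : ℕ)) ≤ (g (Fin.last n) : ℕ) := by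
        refine fin_chain_le hg _ k.castSucc (Fin.last n) ?_
        simp only [Fin.coe_castSucc, Fin.val_last]
        have := k.is_lt; omega
      have hlast := (g (Fin.last n)).is_lt
      have hltk := hg k
      rw [Fin.lt_def] at hltk
      have hstep := cnt_step D k
      have h1 := cnt_le D (k : ℕ)
      have h2 := cnt_le_card D (k : ℕ)
      have h3 := cnt_le_card D ((k : ℕ) + 1)
      simp only [Fin.coe_castSucc, Fin.val_succ] at hlow1 hhigh hltk ⊢
      have hkn := k.is_lt
      by_cases hk : k ∈ D <;> simp only [hk, if_true, if_false] at hstep ⊢ <;> omega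
    · -- Ψ ∘ Φ = id on Q
      intro e he
      funext i
      apply Fin.ext
      simp only []
      have := (e i).is_lt
      have h1 := cnt_le D (i : ℕ)
      omega
    · -- Φ ∘ Ψ = id on R
      intro g hg
      simp only [Finset.mem_coe, Finset.mem_filter, Finset.mem_univ, true_and] at hg
      funext i
      apply Fin.ext
      simp only []
      have hlow : (i : ℕ) ≤ (g i : ℕ) := by
        have := fin_chain_le hg (i : ℕ) 0 i (by simp)
        omega
      have hhigh : (g i : ℕ) + (n - (i : ℕ)) ≤ (g (Fin.last n) : ℕ) := by
        refine fin_chain_le hg _ i (Fin.last n) ?_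
        simp only [Fin.val_last]
        have := i.is_lt; omega
      have hlast := (g (Fin.last n)).is_lt
      have h1 := cnt_le D (i : ℕ)
      have h2 := cnt_le_card D (i : ℕ)
      have h4 := i.is_lt
      omega
  -- Step 3 : count of strictly monotone maps is a binomial coefficient
  have card3 : ((Finset.univ : Finset (Fin (n + 1) → Fin M)).filter (Rpred (N := n) (M := M))).card
      = M.choose (n + 1) := by
    clear card1 card2
    have hpc : (Finset.powersetCard (n + 1) (Finset.univ : Finset (Fin M))).card
        = M.choose (n + 1) := by
      simp [Finset.card_powersetCard]
    rw [← hpc]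
    refine Finset.card_bij' (fun g _ => Finset.image g Finset.univ)
      (fun t ht => fun k => t.orderEmbOfFin (Finset.mem_powersetCard.mp ht).2 k)
      ?_ ?_ ?_ ?_
    · intro g hg
      simp only [Finset.mem_filter, Finset.mem_univ, true_and] at hg
      rw [Finset.mem_powersetCard]
      refine ⟨Finset.subset_univ _, ?_⟩
      rw [Finset.card_image_of_injective _ (Fin.strictMono_iff_lt_succ.mpr hg).injective]
      simp
    · intro t ht
      simp only [Finset.mem_filter, Finset.mem_univ, true_and]
      intro k
      exact (t.orderEmbOfFin (Finset.mem_powersetCard.mp ht).2).strictMono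
        (Fin.castSucc_lt_succ (i := k))
    · intro g hg
      simp only [Finset.mem_filter, Finset.mem_univ, true_and] at hg
      funext k
      exact (congrFun (Finset.orderEmbOfFin_unique
        (Finset.mem_powersetCard.mp (by
          rw [Finset.mem_powersetCard]
          refine ⟨Finset.subset_univ _, ?_⟩
          rw [Finset.card_image_of_injective _ (Fin.strictMono_iff_lt_succ.mpr hg).injective]
          simp)).2
        (fun x => Finset.mem_image_of_mem g (Finset.mem_univ x))
        (Fin.strictMono_iff_lt_succ.mpr hg)) k).symm
    · intro t ht
      apply Finset.coe_injective
      rw [Finset.coe_image, Finset.coe_univ, Set.image_univ, Finset.range_orderEmbOfFin]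
  rw [card1, card2, card3]
end

section
/- Let n ≥ 1 and let r be a real number with r ≥ 1. For all σ, τ ∈ S_n, consider the finite sum Σ w(ε) over all sign functions ε : {1,…,n} → {+1,−1} satisfying: for all i, j ∈ {1,…,n}, τ(i) < τ(j) ⟺ ε(i)·σ(i) < ε(j)·σ(j) (as integers), where w(ε) = Π_{i=1}^n (1/r if ε(i) = +1, and 1 − 1/r if ε(i) = −1). Then this sum equals (r−1)^k / r^{n−1} if Des(σ∘τ⁻¹) = {1,2,…,k} for some k with 0 ≤ k ≤ n−1 (with k = 0 meaning Des(σ∘τ⁻¹) = ∅), and equals 0 if Des(σ∘τ⁻¹) is not of this form. (At r = 2 this specializes to Stembridge's theorem: assigning independent uniform ± signs to the entries of σ, the probability that the standardization of the signed sequence equals τ is 1/2^{n−1} when σ∘τ⁻¹ has descent set an initial segment, and 0 otherwise.) -/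
namespace StembridgeAux

attribute [local instance] Classical.propDecidable

variable {n : ℕ}

/-- The signed sequence associated to `π` and a sign pattern `δ`. -/
def g (π : Equiv.Perm (Fin (n + 1))) (δ : Fin (n + 1) → Bool) (a : Fin (n + 1)) : ℤ :=
  if δ a then ((π a : ℤ) + 1) else -((π a : ℤ) + 1)

/-- The sign pattern which is negative exactly on positions `< m`. -/
def P (n m : ℕ) : Fin (n + 1) → Bool := fun a => decide (m ≤ (a : ℕ))

lemma card_filter_lt (m : ℕ) (hm : m ≤ n + 1) :
    ((Finset.univ : Finset (Fin (n + 1))).filter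
      (fun a : Fin (n + 1) => (a : ℕ) < m)).card = m := by
  rcases Nat.lt_or_ge m (n + 1) with h | h
  · have : ((Finset.univ : Finset (Fin (n + 1))).filter
        (fun a : Fin (n + 1) => (a : ℕ) < m)) = Finset.Iio ⟨m, h⟩ := by
      ext a
      simp [Fin.lt_def]
    rw [this, Fin.card_Iio]
  · have hm' : m = n + 1 := le_antisymm hm h
    subst hm'
    have : ((Finset.univ : Finset (Fin (n + 1))).filter
        (fun a : Fin (n + 1) => (a : ℕ) < n + 1)) = Finset.univ := by
      ext a; simpa using a.isLt
    rw [this, Finset.card_univ, Fintype.card_fin]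

lemma prod_P (r : ℝ) (m : ℕ) (hm : m ≤ n + 1) :
    (∏ a : Fin (n + 1), (if P n m a then 1 / r else 1 - 1 / r)) =
      (1 - 1 / r) ^ m * (1 / r) ^ (n + 1 - m) := by
  rw [Finset.prod_ite]
  have h1 : (Finset.univ.filter (fun a : Fin (n + 1) => P n m a = true)).card = n + 1 - m := by
    have : (Finset.univ.filter (fun a : Fin (n + 1) => P n m a = true)) =
        (Finset.univ.filter (fun a : Fin (n + 1) => ¬ ((a : ℕ) < m))) := by
      ext a; simp [P, Nat.not_lt]
    rw [this, Finset.filter_not, Finset.card_sdiff_of_subset (Finset.filter_subset _ _),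
      card_filter_lt m hm, Finset.card_univ, Fintype.card_fin]
  have h2 : (Finset.univ.filter (fun a : Fin (n + 1) => ¬ P n m a = true)).card = m := by
    have : (Finset.univ.filter (fun a : Fin (n + 1) => ¬ P n m a = true)) =
        (Finset.univ.filter (fun a : Fin (n + 1) => (a : ℕ) < m)) := by
      ext a; simp [P, Nat.not_le]
    rw [this, card_filter_lt m hm]
  rw [Finset.prod_const, Finset.prod_const, h1, h2, mul_comm]

/-- The condition that the signed sequence is order-isomorphic to the identity. -/
def C (π : Equiv.Perm (Fin (n + 1))) (δ : Fin (n + 1) → Bool) : Prop :=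
  ∀ a b : Fin (n + 1), a < b ↔ g π δ a < g π δ b

lemma C_iff_strictMono (π : Equiv.Perm (Fin (n + 1))) (δ : Fin (n + 1) → Bool) :
    C π δ ↔ StrictMono (g π δ) := by
  constructor
  · intro h a b hab
    exact (h a b).mp hab
  · intro h a b
    exact (h.lt_iff_lt).symm

lemma monotone_of_C {π : Equiv.Perm (Fin (n + 1))} {δ : Fin (n + 1) → Bool}
    (h : C π δ) : Monotone δ := by
  intro a b hab
  rcases eq_or_lt_of_le hab with rfl | hab
  · exact le_refl _
  · cases hδa : δ a
    · exact Bool.false_le _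
    · cases hδb : δ b
      · exfalso
        have hlt : g π δ a < g π δ b := (h a b).mp hab
        have h1 : g π δ a = ((π a : ℤ) + 1) := by simp [g, hδa]
        have h2 : g π δ b = -((π b : ℤ) + 1) := by simp [g, hδb]
        rw [h1, h2] at hlt
        have := (π a).1
        omega
      · exact le_refl _

lemma exists_m_of_C {π : Equiv.Perm (Fin (n + 1))} {δ : Fin (n + 1) → Bool}
    (h : C π δ) : ∃ m ≤ n + 1, δ = P n m := by
  have mono := monotone_of_C h
  by_cases hex : (Finset.univ.filter (fun a : Fin (n + 1) => δ a = true)).Nonempty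
  · set a₀ := (Finset.univ.filter (fun a : Fin (n + 1) => δ a = true)).min' hex with ha₀
    have ha₀mem : δ a₀ = true := by
      have := Finset.min'_mem _ hex
      simpa using this
    refine ⟨(a₀ : ℕ), le_of_lt a₀.isLt, ?_⟩
    funext a
    by_cases hc : (a₀ : ℕ) ≤ (a : ℕ)
    · have h1 : δ a₀ ≤ δ a := mono (by exact hc)
      rw [ha₀mem] at h1
      have h2 : δ a = true := le_antisymm (Bool.le_true _) h1
      rw [h2]
      unfold P
      rw [decide_eq_true hc]
    · have h2 : δ a = false := by
        cases hδa : δ a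
        · rfl
        · exfalso
          have : a₀ ≤ a := Finset.min'_le _ a (by simpa using hδa)
          exact hc this
      rw [h2]
      unfold P
      rw [decide_eq_false hc]
  · refine ⟨n + 1, le_refl _, ?_⟩
    rw [Finset.filter_nonempty_iff] at hex
    push_neg at hex
    funext a
    have h2 : δ a = false := by
      cases hδa : δ a
      · rfl
      · exact absurd hδa (hex a (Finset.mem_univ a))
    have h3 : ¬ (n + 1 ≤ (a : ℕ)) := by omega
    rw [h2]
    unfold P
    rw [decide_eq_false h3]

lemma mem_Des_iff (π : Equiv.Perm (Fin (n + 1))) (i : Fin n) :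
    i ∈ Des π ↔ ((π i.succ : ℕ) : ℤ) < ((π i.castSucc : ℕ) : ℤ) := by
  rw [Des, Finset.mem_filter]
  simp only [Finset.mem_univ, true_and]
  rw [Fin.lt_def]
  exact Nat.cast_lt.symm

/-- the descent condition equivalent to `C π (P n m)` -/
lemma C_P_iff (π : Equiv.Perm (Fin (n + 1))) (m : ℕ) :
    C π (P n m) ↔ ∀ i : Fin n,
      (((i : ℕ) + 1 < m → i ∈ Des π) ∧ (m ≤ (i : ℕ) → i ∉ Des π)) := by
  rw [C_iff_strictMono, Fin.strictMono_iff_lt_succ]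
  apply forall_congr'
  intro i
  have hcs : ((i.castSucc : Fin (n + 1)) : ℕ) = (i : ℕ) := rfl
  have hsucc : ((i.succ : Fin (n + 1)) : ℕ) = (i : ℕ) + 1 := rfl
  rw [mem_Des_iff]
  unfold g P
  simp only [decide_eq_true_eq, hcs, hsucc]
  have hne : ((π i.castSucc : ℕ) : ℤ) ≠ ((π i.succ : ℕ) : ℤ) := by
    intro hcon
    have hval : (π i.castSucc : ℕ) = (π i.succ : ℕ) := by exact_mod_cast hcon
    exact (Fin.castSucc_lt_succ : i.castSucc < i.succ).ne (π.injective (Fin.ext hval))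
  by_cases h1 : m ≤ (i : ℕ)
  · have h2 : m ≤ (i : ℕ) + 1 := by omega
    rw [if_pos h1, if_pos h2]
    constructor
    · intro hlt
      exact ⟨fun hc => by omega, fun _ hcon => by omega⟩
    · intro ⟨_, hd⟩
      have := hd h1
      omega
  · by_cases h2 : m ≤ (i : ℕ) + 1
    · rw [if_neg h1, if_pos h2]
      constructor
      · intro _
        exact ⟨fun hc => by omega, fun hc => by omega⟩
      · intro _
        omega
    · rw [if_neg h1, if_neg h2]
      constructor
      · intro hlt
        exact ⟨fun _ => by omega, fun hc => by omega⟩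
      · intro ⟨hd, _⟩
        have := hd (by omega)
        omega

lemma filter_C_eq (π : Equiv.Perm (Fin (n + 1))) (k : ℕ) (hk : k ≤ n)
    (hDes : Des π = Finset.univ.filter (fun i : Fin n => (i : ℕ) < k)) :
    (Finset.univ : Finset (Fin (n + 1) → Bool)).filter (fun δ => C π δ) =
      {P n k, P n (k + 1)} := by
  ext δ
  simp only [Finset.mem_filter, Finset.mem_univ, true_and, Finset.mem_insert,
    Finset.mem_singleton]
  have hmem : ∀ i : Fin n, i ∈ Des π ↔ (i : ℕ) < k := by
    intro i; rw [hDes]; simp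
  constructor
  · intro hC
    obtain ⟨m, hm, rfl⟩ := exists_m_of_C hC
    have hcond := (C_P_iff π m).mp hC
    have hkm : k ≤ m := by
      by_contra hcon
      push_neg at hcon
      have hmn : m < n := lt_of_lt_of_le hcon hk
      have := (hcond ⟨m, hmn⟩).2 (le_refl _)
      rw [hmem] at this
      exact this hcon
    have hmk : m ≤ k + 1 := by
      by_contra hcon
      push_neg at hcon
      have hkn : k < n := by omega
      have := (hcond ⟨k, hkn⟩).1 (by simpa using hcon)
      rw [hmem] at this
      simp at this
    have : m = k ∨ m = k + 1 := by omega
    rcases this with rfl | rfl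
    · left; rfl
    · right; rfl
  · rintro (rfl | rfl)
    · rw [C_P_iff]
      intro i
      rw [hmem]
      exact ⟨fun h => by omega, fun h => by omega⟩
    · rw [C_P_iff]
      intro i
      rw [hmem]
      exact ⟨fun h => by omega, fun h => by omega⟩

lemma filter_C_empty (π : Equiv.Perm (Fin (n + 1)))
    (h : ¬ ∃ k ≤ n, Des π = Finset.univ.filter (fun i : Fin n => (i : ℕ) < k)) :
    (Finset.univ : Finset (Fin (n + 1) → Bool)).filter (fun δ => C π δ) = ∅ := by
  rw [Finset.filter_eq_empty_iff]
  intro δ _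
  intro hC
  apply h
  obtain ⟨m, hm, rfl⟩ := exists_m_of_C hC
  have hcond := (C_P_iff π m).mp hC
  by_cases hc : ∀ i : Fin n, (i : ℕ) < m → i ∈ Des π
  · refine ⟨min m n, min_le_right _ _, ?_⟩
    ext i
    simp only [Finset.mem_filter, Finset.mem_univ, true_and, lt_min_iff]
    constructor
    · intro hi
      have : ¬ m ≤ (i : ℕ) := fun hle => (hcond i).2 hle hi
      exact ⟨by omega, i.isLt⟩
    · intro ⟨h1, _⟩
      exact hc i h1
  · push_neg at hc
    obtain ⟨i₀, hi₀m, hi₀⟩ := hc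
    have hi₀eq : (i₀ : ℕ) = m - 1 := by
      have : ¬ ((i₀ : ℕ) + 1 < m) := fun hlt => hi₀ ((hcond i₀).1 hlt)
      omega
    refine ⟨m - 1, by have := i₀.isLt; omega, ?_⟩
    ext i
    simp only [Finset.mem_filter, Finset.mem_univ, true_and]
    constructor
    · intro hi
      have h1 : ¬ m ≤ (i : ℕ) := fun hle => (hcond i).2 hle hi
      have h2 : (i : ℕ) ≠ m - 1 := by
        intro hcon
        have : i = i₀ := Fin.ext (by omega)
        rw [this] at hi
        exact hi₀ hi
      omega
    · intro hi
      exact (hcond i).1 (by omega)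

end StembridgeAux

/-- generalized Stembridge: assign to each entry of `σ`
(whose 1-indexed values are `σ(i)+1 ∈ {1,…,n+1}`) a sign `+` with weight `1/r`
or `−` with weight `1−1/r`. The total weight of the sign choices for which the
standardization of the signed sequence is `τ` equals `(r−1)^k/r^n` when
`Des(σ∘τ⁻¹)` is the initial segment `{1,…,k}` and `0` otherwise. -/
theorem signed_standardization_weight (n : ℕ) (r : ℝ) (hr : 1 ≤ r)
    (σ τ : Equiv.Perm (Fin (n + 1))) :
    (∀ k : ℕ, k ≤ n →
      Des (σ * τ⁻¹) = Finset.univ.filter (fun i : Fin n => (i : ℕ) < k) →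
      ∑ ε ∈ (Finset.univ : Finset (Fin (n + 1) → Bool)).filter
          (fun ε => ∀ i j : Fin (n + 1), τ i < τ j ↔
            (if ε i then ((σ i : ℤ) + 1) else -((σ i : ℤ) + 1)) <
              (if ε j then ((σ j : ℤ) + 1) else -((σ j : ℤ) + 1))),
        ∏ i, (if ε i then 1 / r else 1 - 1 / r) = (r - 1) ^ k / r ^ n) ∧
    ((¬ ∃ k ≤ n, Des (σ * τ⁻¹) =
        Finset.univ.filter (fun i : Fin n => (i : ℕ) < k)) →
      ∑ ε ∈ (Finset.univ : Finset (Fin (n + 1) → Bool)).filter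
          (fun ε => ∀ i j : Fin (n + 1), τ i < τ j ↔
            (if ε i then ((σ i : ℤ) + 1) else -((σ i : ℤ) + 1)) <
              (if ε j then ((σ j : ℤ) + 1) else -((σ j : ℤ) + 1))),
        ∏ i, (if ε i then 1 / r else 1 - 1 / r) = 0) := by
  classical
  set π := σ * τ⁻¹ with hπ
  have hπτ : ∀ i : Fin (n + 1), π (τ i) = σ i := by
    intro i; simp [hπ]
  -- reindex the sum via ε = δ ∘ τ
  have key : ∑ ε ∈ (Finset.univ : Finset (Fin (n + 1) → Bool)).filter
          (fun ε => ∀ i j : Fin (n + 1), τ i < τ j ↔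
            (if ε i then ((σ i : ℤ) + 1) else -((σ i : ℤ) + 1)) <
              (if ε j then ((σ j : ℤ) + 1) else -((σ j : ℤ) + 1))),
        ∏ i, (if ε i then 1 / r else 1 - 1 / r) =
      ∑ δ ∈ (Finset.univ : Finset (Fin (n + 1) → Bool)).filter
          (fun δ => StembridgeAux.C π δ),
        ∏ a, (if δ a then 1 / r else 1 - 1 / r) := by
    apply Finset.sum_nbij' (i := fun ε => (fun a => ε (τ⁻¹ a)))
      (j := fun δ => (fun i => δ (τ i)))
    · intro ε hε
      simp only [Finset.mem_filter, Finset.mem_univ, true_and] at hε ⊢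
      intro a b
      have := hε (τ⁻¹ a) (τ⁻¹ b)
      simpa [StembridgeAux.g, hπ] using this
    · intro δ hδ
      simp only [Finset.mem_filter, Finset.mem_univ, true_and] at hδ ⊢
      intro i j
      have := hδ (τ i) (τ j)
      rw [StembridgeAux.g, StembridgeAux.g, hπτ, hπτ] at this
      exact this
    · intro ε _
      funext i
      simp
    · intro δ _
      funext a
      simp
    · intro ε _
      exact (Equiv.prod_comp τ⁻¹ (fun a => if ε a then 1 / r else 1 - 1 / r)).symm
  have hr0 : r ≠ 0 := by positivity
  have h1r : (1 : ℝ) - 1 / r = (r - 1) / r := by field_simp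
  constructor
  · intro k hk hDes
    rw [key, StembridgeAux.filter_C_eq π k hk hDes]
    have hne : StembridgeAux.P n k ≠ StembridgeAux.P n (k + 1) := by
      intro hcon
      have := congrFun hcon ⟨k, by omega⟩
      simp [StembridgeAux.P] at this
    rw [Finset.sum_pair hne, StembridgeAux.prod_P r k (by omega),
      StembridgeAux.prod_P r (k + 1) (by omega)]
    have e1 : n + 1 - k = (n - k) + 1 := by omega
    have e2 : n + 1 - (k + 1) = n - k := by omega
    rw [e1, e2, pow_succ, pow_succ]
    have : (1 - 1 / r) ^ k * ((1 / r) ^ (n - k) * (1 / r)) +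
        (1 - 1 / r) ^ k * (1 - 1 / r) * (1 / r) ^ (n - k) =
        (1 - 1 / r) ^ k * (1 / r) ^ (n - k) * (1 / r + (1 - 1 / r)) := by ring
    rw [this]
    have h3 : (1 / r + (1 - 1 / r)) = 1 := by ring
    rw [h3, mul_one, h1r, div_pow, div_pow, one_pow, div_mul_div_comm, mul_one, ← pow_add]
    have hkn : k + (n - k) = n := by omega
    rw [hkn]
  · intro hnone
    rw [key, StembridgeAux.filter_C_empty π hnone, Finset.sum_empty]
end

section
/- Let n ≥ 1 and let r be a real number with r ≥ 1. For a sign function ε : {1,…,n} → {+1,−1}, set w(ε) = Π_{i=1}^n (1/r if ε(i) = +1, and 1 − 1/r if ε(i) = −1). Then the signed-standardization walk lumps by descent sets: for all σ, σ' ∈ S_n with Des(σ) = Des(σ') and every subset T of {1,…,n−1}, Σ w(ε) over all ε such that there exists ρ ∈ S_n with Des(ρ) = T and (for all i, j) ρ(i) < ρ(j) ⟺ ε(i)·σ(i) < ε(j)·σ(j), equals the corresponding sum with σ replaced by σ'. In other words, the probability that the standardization of (ε(1)·σ(1), …, ε(n)·σ(n)) has descent set T depends only on the descent set of σ. -/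
private def signed {n : ℕ} (σ : Equiv.Perm (Fin (n + 1))) (ε : Fin (n + 1) → Bool)
    (i : Fin (n + 1)) : ℤ :=
  if ε i then ((σ i : ℤ) + 1) else -((σ i : ℤ) + 1)

private lemma signed_inj {n : ℕ} (σ : Equiv.Perm (Fin (n + 1))) (ε : Fin (n + 1) → Bool) :
    Function.Injective (signed σ ε) := by
  intro i j hij
  have hi0 : (0 : ℤ) ≤ (σ i : ℤ) := Int.ofNat_nonneg _
  have hj0 : (0 : ℤ) ≤ (σ j : ℤ) := Int.ofNat_nonneg _
  have hval : (σ i : ℤ) = (σ j : ℤ) := by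
    unfold signed at hij
    by_cases hi : ε i <;> by_cases hj : ε j <;> simp [hi, hj] at hij <;> omega
  exact σ.injective (Fin.ext (by exact_mod_cast hval))

private lemma exists_std {N : ℕ} (v : Fin N → ℤ) (hv : Function.Injective v) :
    ∃ ρ : Equiv.Perm (Fin N), ∀ i j, ρ i < ρ j ↔ v i < v j := by
  classical
  set s : Finset ℤ := Finset.univ.image v with hs
  have hcard : s.card = N := by
    rw [hs, Finset.card_image_of_injective _ hv, Finset.card_univ, Fintype.card_fin]
  let e := s.orderIsoOfFin hcard
  have hmem : ∀ i, v i ∈ s := fun i => Finset.mem_image_of_mem v (Finset.mem_univ i)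
  let f : Fin N → Fin N := fun i => e.symm ⟨v i, hmem i⟩
  have hfinj : Function.Injective f := by
    intro i j hij
    exact hv (Subtype.ext_iff.mp (e.symm.injective hij))
  refine ⟨Equiv.ofBijective f (Finite.injective_iff_bijective.mp hfinj), fun i j => ?_⟩
  show f i < f j ↔ _
  rw [e.symm.lt_iff_lt]
  exact Subtype.mk_lt_mk

private lemma cond_imp {n : ℕ} (σ σ' : Equiv.Perm (Fin (n + 1))) (h : Des σ = Des σ')
    (ε : Fin (n + 1) → Bool) (T : Finset (Fin n))
    (hex : ∃ ρ : Equiv.Perm (Fin (n + 1)), Des ρ = T ∧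
      ∀ i j, ρ i < ρ j ↔ signed σ ε i < signed σ ε j) :
    ∃ ρ : Equiv.Perm (Fin (n + 1)), Des ρ = T ∧
      ∀ i j, ρ i < ρ j ↔ signed σ' ε i < signed σ' ε j := by
  obtain ⟨ρ, hρT, hρ⟩ := hex
  obtain ⟨ρ', hρ'⟩ := exists_std (signed σ' ε) (signed_inj σ' ε)
  refine ⟨ρ', ?_, hρ'⟩
  rw [← hρT]
  ext i
  simp only [Des, Finset.mem_filter, Finset.mem_univ, true_and]
  rw [hρ, hρ']
  have hdes : ((σ i.succ : ℕ) < σ i.castSucc) ↔ ((σ' i.succ : ℕ) < σ' i.castSucc) := by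
    have hd : i ∈ Des σ ↔ i ∈ Des σ' := by rw [h]
    simp only [Des, Finset.mem_filter, Finset.mem_univ, true_and, Fin.lt_def] at hd
    exact hd
  have hne : (σ i.succ : ℕ) ≠ σ i.castSucc := by
    intro hh
    exact (Fin.castSucc_lt_succ : i.castSucc < i.succ).ne' (σ.injective (Fin.ext hh))
  have hne' : (σ' i.succ : ℕ) ≠ σ' i.castSucc := by
    intro hh
    exact (Fin.castSucc_lt_succ : i.castSucc < i.succ).ne' (σ'.injective (Fin.ext hh))
  unfold signed
  by_cases h1 : ε i.succ <;> by_cases h2 : ε i.castSucc <;>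
    simp only [h1, h2, if_true, if_false] <;> push_cast <;> omega

/-- the signed-standardization walk lumps by descent sets: the
total weight of the sign choices `ε` for which the standardization of the
signed sequence `(ε(1)·σ(1), …, ε(N)·σ(N))` has descent set `T` depends only
on `Des σ`.  (Here 1-indexed entries of `σ` are realized as `σ(i)+1`.) -/
theorem signed_standardization_lumps (n : ℕ) (r : ℝ) (hr : 1 ≤ r)
    (σ σ' : Equiv.Perm (Fin (n + 1))) (h : Des σ = Des σ')
    (T : Finset (Fin n)) :
    ∑ ε ∈ (Finset.univ : Finset (Fin (n + 1) → Bool)).filter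
        (fun ε => ∃ ρ : Equiv.Perm (Fin (n + 1)), Des ρ = T ∧
          ∀ i j : Fin (n + 1), ρ i < ρ j ↔
            (if ε i then ((σ i : ℤ) + 1) else -((σ i : ℤ) + 1)) <
              (if ε j then ((σ j : ℤ) + 1) else -((σ j : ℤ) + 1))),
      ∏ i, (if ε i then 1 / r else 1 - 1 / r) =
    ∑ ε ∈ (Finset.univ : Finset (Fin (n + 1) → Bool)).filter
        (fun ε => ∃ ρ : Equiv.Perm (Fin (n + 1)), Des ρ = T ∧
          ∀ i j : Fin (n + 1), ρ i < ρ j ↔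
            (if ε i then ((σ' i : ℤ) + 1) else -((σ' i : ℤ) + 1)) <
              (if ε j then ((σ' j : ℤ) + 1) else -((σ' j : ℤ) + 1))),
      ∏ i, (if ε i then 1 / r else 1 - 1 / r) := by
  apply Finset.sum_congr
  · apply Finset.filter_congr
    intro ε _
    constructor
    · exact cond_imp σ σ' h ε T
    · exact cond_imp σ' σ h.symm ε T
  · intros; rfl
end
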